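/- arXiv:2401.11387 — 8 statements merged into one kernel-verified Lean document; each statement's English description precedes it below -/
import Mathlib

section
/- Let A = [[0,u],[1,v]] over a field F have distinct eigenvalues λ₁, λ₂ ∈ F such that λ₁/λ₂ is not a root of unity. If a homogeneous polynomial p ∈ F[α,β] of degree n satisfies σ^k(p) = c·p for some positive integer k and some nonzero c ∈ F, then σ(p) = d·p for some nonzero d ∈ F, where σ is the automorphism with σ(α)=β, σ(β)=uα+vβ. -/
open MvPolynomial

theorem stmt3 {F : Type*} [Field F] (u v : F) (hu : u ≠ 0)
    (σ : MvPolynomial (Fin 2) F ≃ₐ[F] MvPolynomial (Fin 2) F)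
    (hα : σ (X 0) = X 1) (hβ : σ (X 1) = C u * X 0 + C v * X 1)
    (lam1 lam2 : F) (hl1 : lam1 ^ 2 = v * lam1 + u) (hl2 : lam2 ^ 2 = v * lam2 + u)
    (hne : lam1 ≠ lam2)
    (hroot : ∀ n : ℕ, 0 < n → (lam1 / lam2) ^ n ≠ 1)
    (p : MvPolynomial (Fin 2) F) (n : ℕ) (hp : p.IsHomogeneous n)
    (k : ℕ) (hk : 0 < k) (c : F) (hc : c ≠ 0) (hσk : (σ ^ k) p = C c * p) :
    ∃ d : F, d ≠ 0 ∧ σ p = C d * p := by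
  have hl1ne : lam1 ≠ 0 := by
    intro h; apply hu; rw [h] at hl1; simpa using hl1.symm
  have hl2ne : lam2 ≠ 0 := by
    intro h; apply hu; rw [h] at hl2; simpa using hl2.symm
  have hΔ : lam2 - lam1 ≠ 0 := sub_ne_zero.mpr (Ne.symm hne)
  have hC : ∀ a : F, σ (C a) = C a := fun a => by
    simpa [MvPolynomial.algebraMap_eq] using σ.commutes a
  set y1 : MvPolynomial (Fin 2) F := C u * X 0 + C lam1 * X 1 with hy1def
  set y2 : MvPolynomial (Fin 2) F := C u * X 0 + C lam2 * X 1 with hy2def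
  have hσy1 : σ y1 = C lam1 * y1 := by
    have e : (C lam1 * C lam1 : MvPolynomial (Fin 2) F) = C v * C lam1 + C u := by
      rw [← C_mul, ← C_mul, ← C_add]
      exact congrArg C (by linear_combination hl1)
    simp only [hy1def, map_add, map_mul, hC, hα, hβ]
    linear_combination (-(X 1 : MvPolynomial (Fin 2) F)) * e
  have hσy2 : σ y2 = C lam2 * y2 := by
    have e : (C lam2 * C lam2 : MvPolynomial (Fin 2) F) = C v * C lam2 + C u := by
      rw [← C_mul, ← C_mul, ← C_add]
      exact congrArg C (by linear_combination hl2)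
    simp only [hy2def, map_add, map_mul, hC, hα, hβ]
    linear_combination (-(X 1 : MvPolynomial (Fin 2) F)) * e
  -- the change of variables
  set w : F := (u * (lam2 - lam1))⁻¹ with hwdef
  set z1 : MvPolynomial (Fin 2) F :=
    C (lam2 * w) * X 0 - C (lam1 * w) * X 1 with hz1def
  set z2 : MvPolynomial (Fin 2) F :=
    C (u * w) * X 1 - C (u * w) * X 0 with hz2def
  have hCw : (C u * C w * (C lam2 - C lam1) : MvPolynomial (Fin 2) F) = 1 := by
    rw [← C_sub, ← C_mul, ← C_mul, ← C_1]
    refine congrArg C ?_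
    rw [hwdef]
    field_simp
  set Ef : MvPolynomial (Fin 2) F →ₐ[F] MvPolynomial (Fin 2) F := aeval ![y1, y2] with hEf
  set Gf : MvPolynomial (Fin 2) F →ₐ[F] MvPolynomial (Fin 2) F := aeval ![z1, z2] with hGf
  have hEG : Ef.comp Gf = AlgHom.id F _ := by
    apply MvPolynomial.algHom_ext
    intro i
    fin_cases i <;>
    · simp only [AlgHom.coe_comp, Function.comp_apply, AlgHom.id_apply, hEf, hGf, aeval_X,
        Matrix.cons_val_zero, Matrix.cons_val_one, Matrix.head_cons, hz1def, hz2def,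
        map_sub, map_mul, map_add, hy1def, hy2def, C_mul, aeval_C, MvPolynomial.algebraMap_eq,
        Fin.isValue, Fin.mk_zero, Fin.mk_one]
      first
      | linear_combination (X (0:Fin 2) : MvPolynomial (Fin 2) F) * hCw
      | linear_combination (X (1:Fin 2) : MvPolynomial (Fin 2) F) * hCw
  have hGE : Gf.comp Ef = AlgHom.id F _ := by
    apply MvPolynomial.algHom_ext
    intro i
    fin_cases i <;>
    · simp only [AlgHom.coe_comp, Function.comp_apply, AlgHom.id_apply, hEf, hGf, aeval_X,
        Matrix.cons_val_zero, Matrix.cons_val_one, Matrix.head_cons, hz1def, hz2def,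
        map_sub, map_mul, map_add, hy1def, hy2def, C_mul, aeval_C, MvPolynomial.algebraMap_eq,
        Fin.isValue, Fin.mk_zero, Fin.mk_one]
      first
      | linear_combination (X (0:Fin 2) : MvPolynomial (Fin 2) F) * hCw
      | linear_combination (X (1:Fin 2) : MvPolynomial (Fin 2) F) * hCw
  set E : MvPolynomial (Fin 2) F ≃ₐ[F] MvPolynomial (Fin 2) F :=
    AlgEquiv.ofAlgHom Ef Gf hEG hGE with hEdef
  have hEX0 : E (X 0) = y1 := by
    simp [hEdef, Ef]
  have hEX1 : E (X 1) = y2 := by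
    simp [hEdef, Ef]
  set q : MvPolynomial (Fin 2) F := E.symm p with hqdef
  have hpq : E q = p := E.apply_symm_apply p
  -- q is homogeneous of degree n
  have hz1h : z1.IsHomogeneous 1 := by
    rw [hz1def, sub_eq_add_neg]
    exact (((isHomogeneous_X F 0).C_mul _).add (((isHomogeneous_X F 1).C_mul _).neg))
  have hz2h : z2.IsHomogeneous 1 := by
    rw [hz2def, sub_eq_add_neg]
    exact (((isHomogeneous_X F 1).C_mul _).add (((isHomogeneous_X F 0).C_mul _).neg))
  have hqE : q = Gf p := by
    rw [hqdef]; rfl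
  have hqh : q.IsHomogeneous n := by
    rw [hqE, hGf]
    have := hp.aeval ![z1, z2] (fun i => by fin_cases i <;> simpa)
    simpa using this
  -- monomial expansion
  have hmon : ∀ (m : Fin 2 →₀ ℕ) (a : F),
      (monomial m a : MvPolynomial (Fin 2) F) = C a * X 0 ^ m 0 * X 1 ^ m 1 := by
    intro m a
    rw [monomial_eq, Finsupp.prod_fintype, Fin.prod_univ_two, mul_assoc]
    intro i; exact pow_zero _
  set d : (Fin 2 →₀ ℕ) → F := fun m => lam1 ^ m 0 * lam2 ^ m 1 with hddef
  have hdne : ∀ m, d m ≠ 0 := fun m =>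
    mul_ne_zero (pow_ne_zero _ hl1ne) (pow_ne_zero _ hl2ne)
  have hEC : ∀ a : F, E (C a) = C a := fun a => by
    simpa [MvPolynomial.algebraMap_eq] using E.commutes a
  have hEmon : ∀ (m : Fin 2 →₀ ℕ) (a : F),
      E (monomial m a) = C a * y1 ^ m 0 * y2 ^ m 1 := by
    intro m a
    rw [hmon, map_mul, map_mul, map_pow, map_pow, hEX0, hEX1, hEC]
  have hstep : ∀ (m : Fin 2 →₀ ℕ) (a : F),
      σ (E (monomial m a)) = C (d m) * E (monomial m a) := by
    intro m a
    rw [hEmon, map_mul, map_mul, map_pow, map_pow, hC, hσy1, hσy2, mul_pow, mul_pow,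
      ← C_pow, ← C_pow]
    simp only [hddef, C_mul]
    ring
  have hkey : ∀ (t : ℕ) (m : Fin 2 →₀ ℕ) (a : F),
      (σ ^ t) (E (monomial m a)) = C (d m ^ t) * E (monomial m a) := by
    intro t
    induction t with
    | zero => intro m a; simp
    | succ t ih =>
      intro m a
      rw [pow_succ', AlgEquiv.mul_apply, ih, map_mul, hC, hstep, ← mul_assoc, ← C_mul,
        ← pow_succ]
  -- main coefficient equation
  have hcoeff : ∀ m ∈ q.support, d m ^ k = c := by
    intro m hm
    have hqsum : p = ∑ m' ∈ q.support, E (monomial m' (coeff m' q)) := by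
      conv_lhs => rw [← hpq, q.as_sum]
      rw [map_sum]
    have h1 : (σ ^ k) p = ∑ m' ∈ q.support, C (d m' ^ k) * E (monomial m' (coeff m' q)) := by
      rw [hqsum, map_sum]
      exact Finset.sum_congr rfl fun m' _ => hkey k m' _
    have h2 : E.symm ((σ ^ k) p) = ∑ m' ∈ q.support, monomial m' (d m' ^ k * coeff m' q) := by
      rw [h1, map_sum]
      refine Finset.sum_congr rfl fun m' _ => ?_
      rw [map_mul, E.symm_apply_apply]
      have : E.symm (C (d m' ^ k)) = C (d m' ^ k) := by
        simpa [MvPolynomial.algebraMap_eq] using E.symm.commutes (d m' ^ k)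
      rw [this, C_mul_monomial]
    have h3 : E.symm (C c * p) = C c * q := by
      rw [map_mul, ← hqdef]
      have : E.symm (C c) = C c := by
        simpa [MvPolynomial.algebraMap_eq] using E.symm.commutes c
      rw [this]
    have h4 : (∑ m' ∈ q.support, monomial m' (d m' ^ k * coeff m' q)) = C c * q := by
      rw [← h2, ← h3, hσk]
    have h5 := congrArg (coeff m) h4
    rw [coeff_sum] at h5
    simp only [coeff_monomial] at h5
    rw [Finset.sum_ite_eq' q.support m (fun m' => d m' ^ k * coeff m' q)] at h5
    rw [if_pos hm] at h5
    have hq0 : coeff m q ≠ 0 := mem_support_iff.mp hm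
    have : d m ^ k * coeff m q = c * coeff m q := by
      rw [h5]; rw [coeff_C_mul]
    exact mul_right_cancel₀ hq0 this
  -- homogeneity gives m 0 + m 1 = n
  have hdeg : ∀ m ∈ q.support, m 0 + m 1 = n := by
    intro m hm
    have := hqh (mem_support_iff.mp hm)
    simpa [Finsupp.weight_apply, Finsupp.sum_fintype, Fin.sum_univ_two] using this
  -- support is a subsingleton
  have huniq : ∀ m ∈ q.support, ∀ m' ∈ q.support, m = m' := by
    intro m hm m' hm'
    have hd : d m ^ k = d m' ^ k := by rw [hcoeff m hm, hcoeff m' hm']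
    have hdd : ∀ (a b : Fin 2 →₀ ℕ), a ∈ q.support → b ∈ q.support → a 0 ≤ b 0 → a = b := by
      intro a b ha hb hab
      obtain ⟨e, he⟩ := Nat.exists_eq_add_of_le hab
      have hsum : a 0 + a 1 = b 0 + b 1 := by rw [hdeg a ha, hdeg b hb]
      have ha1 : a 1 = b 1 + e := by omega
      have hda : d a ^ k = d b ^ k := by rw [hcoeff a ha, hcoeff b hb]
      have hexp : lam1 ^ (a 0 * k) * lam2 ^ ((b 1 + e) * k) =
          lam1 ^ ((a 0 + e) * k) * lam2 ^ (b 1 * k) := by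
        rw [← ha1, ← he]
        rw [hddef] at hda
        rw [mul_pow, mul_pow, ← pow_mul, ← pow_mul, ← pow_mul, ← pow_mul] at hda
        exact hda
      have he0 : e = 0 := by
        by_contra h
        have hek : 0 < e * k := Nat.mul_pos (Nat.pos_of_ne_zero h) hk
        apply hroot (e * k) hek
        have h2 : lam2 ^ (e * k) = lam1 ^ (e * k) := by
          have h4 : lam1 ^ (a 0 * k) * (lam2 ^ (e * k) * lam2 ^ (b 1 * k))
              = lam1 ^ (a 0 * k) * (lam1 ^ (e * k) * lam2 ^ (b 1 * k)) := by
            calc lam1 ^ (a 0 * k) * (lam2 ^ (e * k) * lam2 ^ (b 1 * k))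
                = lam1 ^ (a 0 * k) * lam2 ^ ((b 1 + e) * k) := by
                  rw [add_mul, pow_add]; ring
              _ = lam1 ^ ((a 0 + e) * k) * lam2 ^ (b 1 * k) := hexp
              _ = lam1 ^ (a 0 * k) * (lam1 ^ (e * k) * lam2 ^ (b 1 * k)) := by
                  rw [add_mul, pow_add]; ring
          have h3 := mul_left_cancel₀ (pow_ne_zero (a 0 * k) hl1ne) h4
          exact mul_right_cancel₀ (pow_ne_zero (b 1 * k) hl2ne) h3
        rw [div_pow, h2, div_self (pow_ne_zero _ hl1ne)]
      have hb0 : a 0 = b 0 := by omega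
      have hb1 : a 1 = b 1 := by omega
      ext i
      fin_cases i
      · exact hb0
      · exact hb1
    rcases le_total (m 0) (m' 0) with h | h
    · exact hdd m m' hm hm' h
    · exact (hdd m' m hm' hm h).symm
  -- conclude
  rcases Finset.eq_empty_or_nonempty q.support with hs | ⟨m₀, hm₀⟩
  · have hq0 : q = 0 := support_eq_empty.mp hs
    have hp0 : p = 0 := by rw [← hpq, hq0, map_zero]
    exact ⟨1, one_ne_zero, by rw [hp0, map_zero, mul_zero]⟩
  · have hqm : q = monomial m₀ (coeff m₀ q) := by
      ext m
      rw [coeff_monomial]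
      by_cases h : m = m₀
      · subst h; rw [if_pos rfl]
      · rw [if_neg (fun hh => h hh.symm)]
        by_contra h0
        exact h (huniq m (mem_support_iff.mpr h0) m₀ hm₀)
    refine ⟨d m₀, hdne m₀, ?_⟩
    rw [← hpq, hqm]
    exact hstep m₀ _
end

section
/- Let A = [[0,u],[1,v]] over a field F have distinct nonzero eigenvalues λ₁, λ₂ with λ₁/λ₂ not a root of unity, and let h₁ = (α,β)·X₁, h₂ = (α,β)·X₂ for eigenvectors X₁, X₂. Then every homogeneous polynomial p ∈ F[α,β] of degree m satisfying σ(p) = c·p for some nonzero c ∈ F is of the form p = d·h₁^i·h₂^(m−i) for some nonzero d ∈ F and some 0 ≤ i ≤ m. -/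
open MvPolynomial

theorem stmt4 {F : Type*} [Field F] (u v : F) (hu : u ≠ 0)
    (σ : MvPolynomial (Fin 2) F ≃ₐ[F] MvPolynomial (Fin 2) F)
    (hα : σ (X 0) = X 1) (hβ : σ (X 1) = C u * X 0 + C v * X 1)
    (lam1 lam2 : F) (hne : lam1 ≠ lam2) (hl1 : lam1 ≠ 0) (hl2 : lam2 ≠ 0)
    (hroot : ∀ n : ℕ, 0 < n → (lam1 / lam2) ^ n ≠ 1)
    (w1 w2 : Fin 2 → F) (hw1 : w1 ≠ 0) (hw2 : w2 ≠ 0)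
    (hE1 : (!![(0 : F), u; 1, v]).mulVec w1 = lam1 • w1)
    (hE2 : (!![(0 : F), u; 1, v]).mulVec w2 = lam2 • w2)
    (p : MvPolynomial (Fin 2) F) (m : ℕ) (hp : p.IsHomogeneous m) (hp0 : p ≠ 0)
    (c : F) (hc : c ≠ 0) (hσ : σ p = C c * p) :
    ∃ d : F, d ≠ 0 ∧ ∃ i : ℕ, i ≤ m ∧
      p = C d * (C (w1 0) * X 0 + C (w1 1) * X 1) ^ i *
            (C (w2 0) * X 0 + C (w2 1) * X 1) ^ (m - i) := by
  -- scalar eigen-equations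
  have e10 := congrFun hE1 0
  have e11 := congrFun hE1 1
  have e20 := congrFun hE2 0
  have e21 := congrFun hE2 1
  simp [Matrix.mulVec, dotProduct, Fin.sum_univ_two] at e10 e11 e20 e21
  -- w1 1 ≠ 0, w2 1 ≠ 0
  have hw11 : w1 1 ≠ 0 := by
    intro h
    apply hw1
    have h0 : w1 0 = 0 := by rw [h] at e11; simpa using e11
    funext i; fin_cases i <;> simp [h0, h]
  have hw21 : w2 1 ≠ 0 := by
    intro h
    apply hw2
    have h0 : w2 0 = 0 := by rw [h] at e21; simpa using e21
    funext i; fin_cases i <;> simp [h0, h]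
  have hw10 : w1 0 ≠ 0 := by
    intro h; rw [h, mul_zero] at e10; exact hw11 (by
      have := mul_eq_zero.mp e10.symm.symm
      rcases mul_eq_zero.mp e10 with h' | h'
      · exact absurd h' hu
      · exact h')
  have hw20 : w2 0 ≠ 0 := by
    intro h; rw [h, mul_zero] at e20
    rcases mul_eq_zero.mp e20 with h' | h'
    · exact hu h'
    · exact hw21 h'
  -- determinant nonzero
  set D : F := w1 0 * w2 1 - w1 1 * w2 0 with hDdef
  have hD : D ≠ 0 := by
    intro h
    have hdet : w1 0 * w2 1 = w1 1 * w2 0 := by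
      rw [hDdef] at h; linear_combination h
    have key : lam1 * (w1 0 * w2 1) = lam2 * (w1 0 * w2 1) := by
      calc lam1 * (w1 0 * w2 1) = (lam1 * w1 0) * w2 1 := by ring
        _ = (u * w1 1) * w2 1 := by rw [e10]
        _ = (u * w2 1) * w1 1 := by ring
        _ = (lam2 * w2 0) * w1 1 := by rw [e20]
        _ = lam2 * (w1 1 * w2 0) := by ring
        _ = lam2 * (w1 0 * w2 1) := by rw [hdet]
    have : lam1 = lam2 := by
      have hnz : w1 0 * w2 1 ≠ 0 := mul_ne_zero hw10 hw21
      exact mul_right_cancel₀ hnz key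
    exact hne this
  -- linear forms and substitutions
  set h1 : MvPolynomial (Fin 2) F := C (w1 0) * X 0 + C (w1 1) * X 1 with hh1
  set h2 : MvPolynomial (Fin 2) F := C (w2 0) * X 0 + C (w2 1) * X 1 with hh2
  set g0 : MvPolynomial (Fin 2) F := C (w2 1 / D) * X 0 + C (-(w1 1) / D) * X 1 with hg0
  set g1 : MvPolynomial (Fin 2) F := C (-(w2 0) / D) * X 0 + C (w1 0 / D) * X 1 with hg1
  set τ : MvPolynomial (Fin 2) F →ₐ[F] MvPolynomial (Fin 2) F := aeval ![h1, h2] with hτ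
  set ρ : MvPolynomial (Fin 2) F →ₐ[F] MvPolynomial (Fin 2) F := aeval ![g0, g1] with hρ
  have hρτ : ρ.comp τ = AlgHom.id F _ := by
    apply MvPolynomial.algHom_ext
    intro i
    fin_cases i <;>
      · simp only [AlgHom.comp_apply, AlgHom.id_apply, hτ, hρ, aeval_X, Matrix.cons_val_zero,
          Matrix.cons_val_one, Matrix.head_cons, hh1, hh2, map_add, map_mul, aeval_C, hg0, hg1,
          Fin.isValue, Fin.zero_eta, Fin.mk_one]
        simp only [← smul_eq_C_mul, ← Algebra.smul_def]
        match_scalars <;> (field_simp; try ring)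
  have hτρ : τ.comp ρ = AlgHom.id F _ := by
    apply MvPolynomial.algHom_ext
    intro i
    fin_cases i <;>
      · simp only [AlgHom.comp_apply, AlgHom.id_apply, hτ, hρ, aeval_X, Matrix.cons_val_zero,
          Matrix.cons_val_one, Matrix.head_cons, hh1, hh2, map_add, map_mul, aeval_C, hg0, hg1,
          Fin.isValue, Fin.zero_eta, Fin.mk_one]
        simp only [← smul_eq_C_mul, ← Algebra.smul_def]
        match_scalars <;> (field_simp; try ring)
  have hτρ' : ∀ r, τ (ρ r) = r := fun r => congrArg (fun f => f r) hτρ ▸ rfl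
  have hρτ' : ∀ r, ρ (τ r) = r := fun r => congrArg (fun f => f r) hρτ ▸ rfl
  -- σ acts on h1, h2 by eigenvalues
  have hC : ∀ r : F, σ (C r) = C r := fun r => by
    rw [← algebraMap_eq]; exact σ.commutes r
  have hσh1 : σ h1 = C lam1 * h1 := by
    rw [hh1]
    simp only [map_add, map_mul, hC, hα, hβ]
    simp only [← smul_eq_C_mul, ← Algebra.smul_def]
    match_scalars <;> first
    | linear_combination e10
    | linear_combination e11
    | linear_combination e10 + e11
    | linear_combination e10 - e11
    | linear_combination e11 - e10
  have hσh2 : σ h2 = C lam2 * h2 := by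
    rw [hh2]
    simp only [map_add, map_mul, hC, hα, hβ]
    simp only [← smul_eq_C_mul, ← Algebra.smul_def]
    match_scalars <;> first
    | linear_combination e20
    | linear_combination e21
    | linear_combination e20 + e21
    | linear_combination e20 - e21
    | linear_combination e21 - e20
  -- diagonal substitution
  set Dg : MvPolynomial (Fin 2) F →ₐ[F] MvPolynomial (Fin 2) F :=
    aeval ![C lam1 * X 0, C lam2 * X 1] with hDg
  have hcomm : (σ.toAlgHom.comp τ) = τ.comp Dg := by
    apply MvPolynomial.algHom_ext
    intro i
    fin_cases i <;>
      simp [hτ, hDg, hσh1, hσh2, hC, smul_eq_C_mul]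
  have hcomm' : ∀ r, σ (τ r) = τ (Dg r) :=
    fun r => congrArg (fun f => f r) hcomm ▸ rfl
  -- q := ρ p
  set q : MvPolynomial (Fin 2) F := ρ p with hqdef
  have hpq : τ q = p := hτρ' p
  have hq0 : q ≠ 0 := by
    intro h
    apply hp0
    rw [← hpq, h, map_zero]
  -- q is homogeneous of degree m
  have hg0hom : g0.IsHomogeneous 1 :=
    ((isHomogeneous_X F 0).C_mul _).add ((isHomogeneous_X F 1).C_mul _)
  have hg1hom : g1.IsHomogeneous 1 :=
    ((isHomogeneous_X F 0).C_mul _).add ((isHomogeneous_X F 1).C_mul _)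
  have hqhom : q.IsHomogeneous m := by
    have := hp.aeval ![g0, g1] (fun i => by fin_cases i <;> simpa)
    simpa [hqdef, hρ] using this
  -- Dg q = C c * q
  have hDq : Dg q = C c * q := by
    have h1' : τ (Dg q) = τ (C c * q) := by
      rw [← hcomm', hpq, hσ, map_mul]
      congr 1
      · rw [hτ, aeval_C, algebraMap_eq]
      · exact hpq.symm
    have := congrArg ρ h1'
    rwa [hρτ', hρτ'] at this
  -- coefficients of Dg r
  have hcoeffDg : ∀ (r : MvPolynomial (Fin 2) F) (s : Fin 2 →₀ ℕ),
      coeff s (Dg r) = lam1 ^ (s 0) * lam2 ^ (s 1) * coeff s r := by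
    intro r
    induction r using MvPolynomial.induction_on' with
    | monomial s' a =>
      intro s
      have hmon : Dg (monomial s' a) = monomial s' (lam1 ^ (s' 0) * lam2 ^ (s' 1) * a) := by
        rw [hDg, aeval_monomial]
        rw [Finsupp.prod_fintype _ _ (fun i => pow_zero _)]
        rw [Fin.prod_univ_two]
        simp only [Matrix.cons_val_zero, Matrix.cons_val_one, Matrix.head_cons]
        rw [monomial_eq, Finsupp.prod_fintype _ _ (fun i => pow_zero _), Fin.prod_univ_two]
        rw [algebraMap_eq]
        rw [mul_pow, mul_pow, ← C_pow, ← C_pow, C_mul, C_mul]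
        ring
      rw [hmon, coeff_monomial, coeff_monomial]
      by_cases h : s' = s
      · simp [h]
      · simp [h]
    | add r1 r2 ih1 ih2 =>
      intro s
      rw [map_add, coeff_add, coeff_add, ih1, ih2]
      ring
  -- every s in the support satisfies lam1^(s 0) * lam2^(s 1) = c
  have hsupp : ∀ s ∈ q.support, lam1 ^ (s 0) * lam2 ^ (s 1) = c := by
    intro s hs
    have hcs : coeff s q ≠ 0 := mem_support_iff.mp hs
    have := congrArg (coeff s) hDq
    rw [hcoeffDg, coeff_C_mul] at this
    exact mul_right_cancel₀ hcs this
  have hdeg : ∀ s ∈ q.support, s 0 + s 1 = m := by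
    intro s hs
    have hcs : coeff s q ≠ 0 := mem_support_iff.mp hs
    have := hqhom hcs
    rw [Finsupp.weight_apply, Finsupp.sum_fintype _ _ (fun i => by simp),
      Fin.sum_univ_two] at this
    simpa using this
  -- the support is a single monomial
  obtain ⟨s0, hs0⟩ := MvPolynomial.ne_zero_iff.mp hq0
  have hs0mem : s0 ∈ q.support := mem_support_iff.mpr hs0
  have huniq : ∀ s ∈ q.support, s = s0 := by
    intro s hs
    have h1' : lam1 ^ (s 0) * lam2 ^ (s 1) = lam1 ^ (s0 0) * lam2 ^ (s0 1) := by
      rw [hsupp s hs, hsupp s0 hs0mem]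
    have h2' : s 0 + s 1 = s0 0 + s0 1 := by
      rw [hdeg s hs, hdeg s0 hs0mem]
    have key : s 0 = s0 0 := by
      rcases le_or_gt (s 0) (s0 0) with hle | hlt
      · by_contra hne'
        have hlt' : s 0 < s0 0 := lt_of_le_of_ne hle hne'
        obtain ⟨k, hk⟩ : ∃ k, s0 0 = s 0 + k := ⟨s0 0 - s 0, by omega⟩
        have hkpos : 0 < k := by omega
        have hs1 : s 1 = s0 1 + k := by omega
        rw [hk, hs1, pow_add, pow_add] at h1'
        have : lam2 ^ k = lam1 ^ k := by
          have hnz : lam1 ^ (s 0) * lam2 ^ (s0 1) ≠ 0 :=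
            mul_ne_zero (pow_ne_zero _ hl1) (pow_ne_zero _ hl2)
          apply mul_left_cancel₀ hnz
          ring_nf
          ring_nf at h1'
          linear_combination h1'
        exact hroot k hkpos (by
          rw [div_pow, this, div_self (pow_ne_zero _ hl1)])
      · by_contra hne'
        obtain ⟨k, hk⟩ : ∃ k, s 0 = s0 0 + k := ⟨s 0 - s0 0, by omega⟩
        have hkpos : 0 < k := by omega
        have hs1 : s0 1 = s 1 + k := by omega
        rw [hk, hs1, pow_add, pow_add] at h1'
        have : lam1 ^ k = lam2 ^ k := by
          have hnz : lam1 ^ (s0 0) * lam2 ^ (s 1) ≠ 0 :=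
            mul_ne_zero (pow_ne_zero _ hl1) (pow_ne_zero _ hl2)
          apply mul_left_cancel₀ hnz
          ring_nf
          ring_nf at h1'
          linear_combination h1'
        exact hroot k hkpos (by
          rw [div_pow, this, div_self (pow_ne_zero _ hl2)])
    have key2 : s 1 = s0 1 := by omega
    ext i
    fin_cases i
    · exact key
    · exact key2
  -- q is a monomial
  have hqmon : q = monomial s0 (coeff s0 q) := by
    ext s
    rw [coeff_monomial]
    by_cases h : s0 = s
    · subst h; simp
    · rw [if_neg h]
      by_contra hne'
      exact h ((huniq s (mem_support_iff.mpr hne')).symm)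
  -- assemble
  refine ⟨coeff s0 q, hs0, s0 0, ?_, ?_⟩
  · have := hdeg s0 hs0mem; omega
  · have hm : m - s0 0 = s0 1 := by have := hdeg s0 hs0mem; omega
    rw [hm, ← hpq, hqmon]
    rw [hτ, aeval_monomial, Finsupp.prod_fintype _ _ (fun i => pow_zero _), Fin.prod_univ_two]
    simp only [Matrix.cons_val_zero, Matrix.cons_val_one, Matrix.head_cons]
    rw [algebraMap_eq, hh1, hh2]
    rw [coeff_monomial, if_pos rfl]
    ring
end

section
/- Let σ be a degree-preserving automorphism of F[α,β]. If p ∈ F[α,β]∖F and m ∈ ℕ⁺ satisfy p | σ^m(p), then Dis_σ(h·σⁿ(p), g·p) = +∞ for any nonzero g, h ∈ F[α,β] and any integer n. -/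
open MvPolynomial

/-- The spread of two polynomials: the set of natural numbers `m` such that
`p` and `σ^m q` have a nontrivial (nonconstant) common factor. -/
def Spr {F : Type*} [Field F]
    (σ : MvPolynomial (Fin 2) F ≃ₐ[F] MvPolynomial (Fin 2) F)
    (p q : MvPolynomial (Fin 2) F) : Set ℕ :=
  {m | ∃ d : MvPolynomial (Fin 2) F, 0 < d.totalDegree ∧ d ∣ p ∧ d ∣ (σ ^ m) q}

/-- The dispersion: `⊥` (playing the role of `-1`) if the spread is empty, its maximum
if finite nonempty, and `⊤` (i.e. `+∞`) if the spread is infinite. -/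
noncomputable def Dis {F : Type*} [Field F]
    (σ : MvPolynomial (Fin 2) F ≃ₐ[F] MvPolynomial (Fin 2) F)
    (p q : MvPolynomial (Fin 2) F) : WithBot ℕ∞ :=
  sSup ((fun m : ℕ => ((m : ℕ∞) : WithBot ℕ∞)) '' Spr σ p q)

theorem stmt8 {F : Type*} [Field F]
    (σ : MvPolynomial (Fin 2) F ≃ₐ[F] MvPolynomial (Fin 2) F)
    (hdeg : ∀ p : MvPolynomial (Fin 2) F, (σ p).totalDegree = p.totalDegree)
    (p : MvPolynomial (Fin 2) F) (hpF : 0 < p.totalDegree)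
    (m : ℕ) (hm : 0 < m) (hdvd : p ∣ (σ ^ m) p)
    (g h : MvPolynomial (Fin 2) F) (hg : g ≠ 0) (hh : h ≠ 0) (n : ℤ) :
    Dis σ (h * (σ ^ n) p) (g * p) = ⊤ := by
  classical
  -- degree preservation for natural powers
  have hdegn : ∀ (k : ℕ) (q : MvPolynomial (Fin 2) F),
      ((σ ^ k) q).totalDegree = q.totalDegree := by
    intro k
    induction k with
    | zero => intro q; simp
    | succ k ih =>
      intro q
      rw [pow_succ, AlgEquiv.mul_apply, ih, hdeg]
  -- degree preservation for integer powers
  have hdegz : ∀ (j : ℤ) (q : MvPolynomial (Fin 2) F),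
      ((σ ^ j) q).totalDegree = q.totalDegree := by
    intro j q
    cases j with
    | ofNat k => rw [Int.ofNat_eq_coe, zpow_natCast]; exact hdegn k q
    | negSucc k =>
      rw [zpow_negSucc]
      have : ((σ ^ (k + 1)) ((σ ^ (k + 1))⁻¹ q)).totalDegree
          = ((σ ^ (k + 1))⁻¹ q).totalDegree := hdegn (k + 1) _
      rw [← AlgEquiv.mul_apply, mul_inv_cancel, AlgEquiv.one_apply] at this
      exact this.symm
  -- p divides σ^(k*m) p
  have hdvdk : ∀ k : ℕ, p ∣ (σ ^ (k * m)) p := by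
    intro k
    induction k with
    | zero => simp
    | succ k ih =>
      have h2 : (σ ^ (k * m)) p ∣ (σ ^ (k * m)) ((σ ^ m) p) := map_dvd _ hdvd
      have h3 : (σ ^ ((k + 1) * m)) p = (σ ^ (k * m)) ((σ ^ m) p) := by
        rw [add_mul, one_mul, pow_add, AlgEquiv.mul_apply]
      exact ih.trans (by rw [h3]; exact h2)
  -- membership in the spread
  have hmem : ∀ k : ℕ, 0 ≤ n + (k * m : ℕ) →
      ((n + (k * m : ℕ)).toNat) ∈ Spr σ (h * (σ ^ n) p) (g * p) := by
    intro k hk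
    refine ⟨(σ ^ n) p, ?_, dvd_mul_left _ _, ?_⟩
    · rw [hdegz]; exact hpF
    · have h1 : (σ ^ n) p ∣ (σ ^ n) ((σ ^ ((k * m : ℕ) : ℤ)) p) := by
        have := map_dvd (σ ^ n) (hdvdk k)
        rwa [← zpow_natCast σ (k * m)] at this
      have h2 : (σ ^ ((n + (k * m : ℕ)).toNat)) p
          = (σ ^ n) ((σ ^ ((k * m : ℕ) : ℤ)) p) := by
        rw [← AlgEquiv.mul_apply, ← zpow_add, ← zpow_natCast σ ((n + (k * m : ℕ)).toNat)]
        have hEq : (((n + (k * m : ℕ)).toNat : ℕ) : ℤ) = n + (k * m : ℕ) := by omega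
        rw [hEq]
      rw [map_mul]
      exact Dvd.dvd.mul_left (by rw [h2]; exact h1) _
  -- conclude
  rw [Dis, sSup_eq_top]
  intro b hb
  obtain ⟨N, hN⟩ : ∃ N : ℕ, b < ((N : ℕ∞) : WithBot ℕ∞) := by
    induction b using WithBot.recBotCoe with
    | bot => exact ⟨0, WithBot.bot_lt_coe _⟩
    | coe e =>
      have he : e ≠ ⊤ := by
        intro hE
        subst hE
        exact absurd hb (by simp [top_le_iff])
      obtain ⟨N0, rfl⟩ := WithTop.ne_top_iff_exists.mp he
      exact ⟨N0 + 1, WithBot.coe_lt_coe.mpr (WithTop.coe_lt_coe.mpr (Nat.lt_succ_self N0))⟩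
  set k : ℕ := N + n.natAbs + 1 with hk
  have hkm : k ≤ k * m := Nat.le_mul_of_pos_right k hm
  have hpos : 0 ≤ n + (k * m : ℕ) := by omega
  refine ⟨((((n + (k * m : ℕ)).toNat : ℕ) : ℕ∞) : WithBot ℕ∞),
    ⟨(n + (k * m : ℕ)).toNat, hmem k hpos, rfl⟩, ?_⟩
  refine lt_of_lt_of_le hN ?_
  have hle : N ≤ (n + (k * m : ℕ)).toNat := by omega
  exact_mod_cast hle
end

section
/- Let σ be a degree-preserving automorphism of F[α,β] restricting to an automorphism of F. For nonzero q, r ∈ F[α,β], Dis_σ(q, r) = +∞ if and only if r has a nonconstant factor p that is semi-periodic (σ^k(p) = c·p for some k>0, nonzero c ∈ F) such that σⁿ(p) | q for some integer n ≥ 0. -/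
open MvPolynomial


open MvPolynomial

/-- A multivariate polynomial of total degree zero is a constant. -/
lemma aux_eq_C_of_totalDegree_eq_zero {F : Type*} [Field F]
    {p : MvPolynomial (Fin 2) F} (h : p.totalDegree = 0) : p = C (p.coeff 0) := by
  ext m
  rw [coeff_C]
  rcases eq_or_ne (0 : Fin 2 →₀ ℕ) m with hm | hm
  · rw [if_pos hm, ← hm]
  · rw [if_neg hm]
    by_contra hc
    have h2 := (totalDegree_eq_zero_iff _ p).1 h m (mem_support_iff.2 hc)
    exact hm (Finsupp.ext fun x => (h2 x).symm)

/-- Units of a polynomial ring over a field are nonzero constants. -/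
lemma aux_isUnit_iff {F : Type*} [Field F] {u : MvPolynomial (Fin 2) F}
    (h : IsUnit u) : ∃ c : F, c ≠ 0 ∧ u = C c := by
  have h1 : IsUnit (MvPolynomial.finSuccEquiv F 1 u) := h.map _
  obtain ⟨r, hr, hru⟩ := Polynomial.isUnit_iff.1 h1
  have h2 : IsUnit (MvPolynomial.finSuccEquiv F 0 r) := hr.map _
  obtain ⟨s, hs, hsr⟩ := Polynomial.isUnit_iff.1 h2
  -- s : MvPolynomial (Fin 0) F is a constant
  have hsC : s = C (s.coeff 0) := s.eq_C_of_isEmpty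
  set c : F := s.coeff 0 with hc
  have h3 : (MvPolynomial.finSuccEquiv F 0).symm (Polynomial.C (C c)) = C c :=
    RingHom.congr_fun (finSuccEquiv_comp_C_eq_C 0) c
  have hrC : r = C c := by
    calc r = (MvPolynomial.finSuccEquiv F 0).symm (MvPolynomial.finSuccEquiv F 0 r) :=
          ((MvPolynomial.finSuccEquiv F 0).symm_apply_apply r).symm
      _ = (MvPolynomial.finSuccEquiv F 0).symm (Polynomial.C s) := by rw [hsr]
      _ = (MvPolynomial.finSuccEquiv F 0).symm (Polynomial.C (C c)) := by rw [← hsC]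
      _ = C c := h3
  have h4 : (MvPolynomial.finSuccEquiv F 1).symm (Polynomial.C (C c)) = C c :=
    RingHom.congr_fun (finSuccEquiv_comp_C_eq_C 1) c
  have huC : u = C c := by
    calc u = (MvPolynomial.finSuccEquiv F 1).symm (MvPolynomial.finSuccEquiv F 1 u) :=
          ((MvPolynomial.finSuccEquiv F 1).symm_apply_apply u).symm
      _ = (MvPolynomial.finSuccEquiv F 1).symm (Polynomial.C r) := by rw [hru]
      _ = (MvPolynomial.finSuccEquiv F 1).symm (Polynomial.C (C c)) := by rw [hrC]
      _ = C c := h4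
  refine ⟨c, ?_, huC⟩
  intro hc0
  rw [hc0] at huC
  simp only [map_zero] at huC
  exact h.ne_zero huC

/-- An irreducible polynomial over a field has positive total degree. -/
lemma aux_irreducible_totalDegree_pos {F : Type*} [Field F]
    {e : MvPolynomial (Fin 2) F} (he : Irreducible e) : 0 < e.totalDegree := by
  rcases Nat.eq_zero_or_pos e.totalDegree with h | h
  case inr => exact h
  · exfalso
    have heC := aux_eq_C_of_totalDegree_eq_zero h
    have hc0 : e.coeff 0 ≠ 0 := by
      intro h0
      rw [h0, map_zero] at heC
      exact he.ne_zero heC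
    exact he.not_isUnit (heC ▸ (hc0.isUnit.map (C : F →+* MvPolynomial (Fin 2) F)))

theorem stmt9 {F : Type*} [Field F]
    (σ : MvPolynomial (Fin 2) F ≃ₐ[F] MvPolynomial (Fin 2) F)
    (hdeg : ∀ p : MvPolynomial (Fin 2) F, (σ p).totalDegree = p.totalDegree)
    (q r : MvPolynomial (Fin 2) F) (hq : q ≠ 0) (hr : r ≠ 0) :
    Dis σ q r = ⊤ ↔
      ∃ p : MvPolynomial (Fin 2) F, p ∣ r ∧ 0 < p.totalDegree ∧
        (∃ k : ℕ, 0 < k ∧ ∃ c : F, c ≠ 0 ∧ (σ ^ k) p = C c * p) ∧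
        ∃ n : ℕ, (σ ^ n) p ∣ q := by
  classical
  letI : NormalizationMonoid (MvPolynomial (Fin 2) F) :=
    UniqueFactorizationMonoid.normalizationMonoid.toNormalizationMonoid
  -- powers of σ preserve total degree
  have degpow : ∀ (m : ℕ) (p : MvPolynomial (Fin 2) F),
      ((σ ^ m) p).totalDegree = p.totalDegree := by
    intro m
    induction m with
    | zero => intro p; simp
    | succ m ih =>
      intro p
      have : (σ ^ (m + 1)) p = (σ ^ m) (σ p) := by rw [pow_succ]; rfl
      rw [this, ih (σ p), hdeg p]
  have deginv : ∀ (m : ℕ) (p : MvPolynomial (Fin 2) F),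
      (((σ ^ m)⁻¹) p).totalDegree = p.totalDegree := by
    intro m p
    conv_rhs => rw [← (σ ^ m).apply_symm_apply p]
    rw [degpow]
    rfl
  -- σ^m fixes constants
  have powC : ∀ (m : ℕ) (c : F), (σ ^ m) (C c) = C c := by
    intro m c
    have := (σ ^ m).commutes c
    rwa [MvPolynomial.algebraMap_eq] at this
  constructor
  · -- forward direction
    intro h
    -- the spread is infinite
    have hinf : (Spr σ q r).Infinite := by
      by_contra hfin
      rw [Set.not_infinite] at hfin
      have himfin : ((fun m : ℕ => ((m : ℕ∞) : WithBot ℕ∞)) '' Spr σ q r).Finite :=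
        hfin.image _
      rcases ((fun m : ℕ => ((m : ℕ∞) : WithBot ℕ∞)) '' Spr σ q r).eq_empty_or_nonempty with
        hemp | hne
      · rw [Dis, hemp, sSup_empty] at h
        exact (bot_ne_top (α := WithBot ℕ∞)) h
      · have hmem := hne.csSup_mem himfin
        rw [Dis] at h
        rw [h] at hmem
        obtain ⟨m, _, hm⟩ := hmem
        have : ((m : ℕ∞) : WithBot ℕ∞) ≠ ⊤ := by
          exact fun h => ENat.coe_ne_top m (WithBot.coe_injective h)
        exact this hm
    -- choose irreducible common factors
    have key : ∀ m ∈ Spr σ q r, ∃ a b e : MvPolynomial (Fin 2) F,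
        a ∈ UniqueFactorizationMonoid.normalizedFactors q ∧
        b ∈ UniqueFactorizationMonoid.normalizedFactors r ∧
        Irreducible e ∧ e ∣ q ∧ e ∣ (σ ^ m) r ∧
        Associated e a ∧ Associated (((σ ^ m)⁻¹) e) b := by
      intro m hm
      obtain ⟨d, hd, hdq, hdr⟩ := hm
      have hd0 : d ≠ 0 := by
        intro h0
        rw [h0, totalDegree_zero] at hd
        exact lt_irrefl 0 hd
      have hdnu : ¬IsUnit d := by
        intro hu
        obtain ⟨c, _, hdc⟩ := aux_isUnit_iff hu
        rw [hdc, totalDegree_C] at hd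
        exact lt_irrefl 0 hd
      obtain ⟨e, he, hed⟩ := WfDvdMonoid.exists_irreducible_factor hdnu hd0
      have heq : e ∣ q := hed.trans hdq
      have her : e ∣ (σ ^ m) r := hed.trans hdr
      obtain ⟨a, ha, hea⟩ :=
        UniqueFactorizationMonoid.exists_mem_normalizedFactors_of_dvd hq he heq
      have he' : Irreducible (((σ ^ m)⁻¹) e) := he.map ((σ ^ m)⁻¹ : _ ≃ₐ[F] _)
      have her' : ((σ ^ m)⁻¹) e ∣ r := by
        have := map_dvd ((σ ^ m)⁻¹ : _ ≃ₐ[F] _) her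
        rwa [show ((σ ^ m)⁻¹) ((σ ^ m) r) = r from (σ ^ m).symm_apply_apply r] at this
      obtain ⟨b, hb, heb⟩ :=
        UniqueFactorizationMonoid.exists_mem_normalizedFactors_of_dvd hr he' her'
      exact ⟨a, b, e, ha, hb, he, heq, her, hea, heb⟩
    choose! a b e ha hb he heQ heR hea heb using key
    -- pigeonhole
    have hmaps : Set.MapsTo (fun m => (a m, b m)) (Spr σ q r)
        (((UniqueFactorizationMonoid.normalizedFactors q).toFinset : Set _) ×ˢ
          ((UniqueFactorizationMonoid.normalizedFactors r).toFinset : Set _)) := by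
      intro m hm
      exact ⟨Multiset.mem_toFinset.2 (ha m hm), Multiset.mem_toFinset.2 (hb m hm)⟩
    obtain ⟨m1, hm1, m2, hm2, hne, hfeq⟩ :=
      hinf.exists_ne_map_eq_of_mapsTo hmaps
        (Set.toFinite _)
    have main : ∀ m1 m2 : ℕ, m1 ∈ Spr σ q r → m2 ∈ Spr σ q r → m1 < m2 →
        a m1 = a m2 → b m1 = b m2 →
        ∃ p : MvPolynomial (Fin 2) F, p ∣ r ∧ 0 < p.totalDegree ∧
          (∃ k : ℕ, 0 < k ∧ ∃ c : F, c ≠ 0 ∧ (σ ^ k) p = C c * p) ∧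
          ∃ n : ℕ, (σ ^ n) p ∣ q := by
      clear hm1 hm2 hne hfeq m1 m2
      intro m1 m2 hm1 hm2 hlt haeq hbeq
      have hee : Associated (e m1) (e m2) :=
        (hea m1 hm1).trans (haeq ▸ (hea m2 hm2).symm)
      have hff : Associated (((σ ^ m1)⁻¹) (e m1)) (((σ ^ m2)⁻¹) (e m2)) :=
        (heb m1 hm1).trans (hbeq ▸ (heb m2 hm2).symm)
      set p : MvPolynomial (Fin 2) F := ((σ ^ m2)⁻¹) (e m1) with hp
      -- p is associated to (σ^m2)⁻¹ (e m2)
      have hassoc : Associated p (((σ ^ m2)⁻¹) (e m2)) := by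
        refine dvd_dvd_iff_associated.1 ⟨?_, ?_⟩
        · exact map_dvd ((σ ^ m2)⁻¹ : _ ≃ₐ[F] _) hee.dvd
        · exact map_dvd ((σ ^ m2)⁻¹ : _ ≃ₐ[F] _) hee.symm.dvd
      have hpr : p ∣ r := by
        have h2 : ((σ ^ m2)⁻¹) (e m2) ∣ r := by
          have := map_dvd ((σ ^ m2)⁻¹ : _ ≃ₐ[F] _) (heR m2 hm2)
          rwa [show ((σ ^ m2)⁻¹) ((σ ^ m2) r) = r from (σ ^ m2).symm_apply_apply r] at this
        exact hassoc.dvd.trans h2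
      have hpdeg : 0 < p.totalDegree := by
        rw [hp, deginv]
        exact aux_irreducible_totalDegree_pos (he m1 hm1)
      -- σ^(m2-m1) p = (σ^m1)⁻¹ (e m1)
      have hshift : (σ ^ (m2 - m1)) p = ((σ ^ m1)⁻¹) (e m1) := by
        apply (σ ^ m1).injective
        have h1 : (σ ^ m1) ((σ ^ (m2 - m1)) p) = (σ ^ m2) p := by
          have : (σ ^ m1) * (σ ^ (m2 - m1)) = σ ^ m2 := by
            rw [← pow_add]
            congr 1
            omega
          calc (σ ^ m1) ((σ ^ (m2 - m1)) p) = ((σ ^ m1) * (σ ^ (m2 - m1))) p := rfl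
            _ = (σ ^ m2) p := by rw [this]
        rw [h1, hp]
        have h2 : (σ ^ m2) (((σ ^ m2)⁻¹) (e m1)) = e m1 :=
          (σ ^ m2).apply_symm_apply (e m1)
        have h3 : (σ ^ m1) (((σ ^ m1)⁻¹) (e m1)) = e m1 :=
          (σ ^ m1).apply_symm_apply (e m1)
        rw [h2, h3]
      -- σ^(m2-m1) p is associated to p
      have hsa : Associated p ((σ ^ (m2 - m1)) p) := by
        rw [hshift]
        exact (hassoc.trans hff.symm)
      obtain ⟨u, hu⟩ := hsa
      obtain ⟨c, hc, hcu⟩ := aux_isUnit_iff u.isUnit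
      refine ⟨p, hpr, hpdeg, ⟨m2 - m1, by omega, c, hc, ?_⟩, m2, ?_⟩
      · rw [← hu, hcu, mul_comm]
      · have : (σ ^ m2) p = e m1 := (σ ^ m2).apply_symm_apply (e m1)
        rw [this]
        exact heQ m1 hm1
    have hab : a m1 = a m2 ∧ b m1 = b m2 := by
      constructor
      · exact congrArg Prod.fst hfeq
      · exact congrArg Prod.snd hfeq
    rcases hne.lt_or_gt with hlt | hlt
    · exact main m1 m2 hm1 hm2 hlt hab.1 hab.2
    · exact main m2 m1 hm2 hm1 hlt hab.1.symm hab.2.symm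
  · -- reverse direction
    rintro ⟨p, hpr, hpdeg, ⟨k, hk, c, hc, hck⟩, n, hn⟩
    have hpow : ∀ j : ℕ, (σ ^ (j * k)) p = C (c ^ j) * p := by
      intro j
      induction j with
      | zero => simp
      | succ j ih =>
        have h1 : (σ ^ ((j + 1) * k)) p = (σ ^ (j * k)) ((σ ^ k) p) := by
          show (σ ^ ((j + 1) * k)) p = ((σ ^ (j * k)) * (σ ^ k)) p
          rw [← pow_add]
          congr 2
          ring
        rw [h1, hck, map_mul, powC, ih, ← mul_assoc, ← map_mul, pow_succ, mul_comm (c ^ j) c]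
    have hsub : ∀ j : ℕ, n + j * k ∈ Spr σ q r := by
      intro j
      refine ⟨(σ ^ (n + j * k)) p, by rw [degpow]; exact hpdeg, ?_, map_dvd _ hpr⟩
      have h2 : (σ ^ (n + j * k)) p = C (c ^ j) * (σ ^ n) p := by
        have : (σ ^ (n + j * k)) p = (σ ^ n) ((σ ^ (j * k)) p) := by
          show (σ ^ (n + j * k)) p = ((σ ^ n) * (σ ^ (j * k))) p
          rw [← pow_add]
        rw [this, hpow j, map_mul, powC]
      rw [h2, mul_comm]
      exact (IsUnit.mul_right_dvd ((pow_ne_zero j hc).isUnit.map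
        (C : F →+* MvPolynomial (Fin 2) F))).2 hn
    have hinf : (Spr σ q r).Infinite := by
      refine Set.infinite_of_injective_forall_mem (f := fun j : ℕ => n + j * k) ?_ hsub
      intro j1 j2 hj
      simp only at hj
      have : j1 * k = j2 * k := by omega
      exact Nat.eq_of_mul_eq_mul_right hk this
    rw [Dis, sSup_eq_top]
    intro bb hbb
    rcases bb with _ | x
    · exact ⟨((n : ℕ∞) : WithBot ℕ∞), ⟨n, by simpa using hsub 0, rfl⟩, WithBot.bot_lt_coe _⟩
    · rcases x with _ | t
      · exact absurd rfl hbb.ne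
      · obtain ⟨m, hm, hmt⟩ := hinf.exists_gt t
        refine ⟨((m : ℕ∞) : WithBot ℕ∞), ⟨m, hm, rfl⟩, ?_⟩
        show ((t : ℕ∞) : WithBot ℕ∞) < ((m : ℕ∞) : WithBot ℕ∞)
        exact_mod_cast hmt
end

section
/- Let σ be a degree-preserving automorphism of F[α,β], and let a, b ∈ F[α,β] with splitting factorizations a = a_∞·ā and b = b_∞·b̄ (every irreducible factor of a_∞, b_∞ has infinite dispersion; every irreducible factor of ā, b̄ has finite dispersion). Then Spr_σ(ā, b̄) is a finite set. -/
open MvPolynomial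


open MvPolynomial

/-- A unit of `F[α,β]` is a constant. -/
lemma aux_eq_C_of_isUnit {F : Type*} [Field F]
    {d : MvPolynomial (Fin 2) F} (h : IsUnit d) : ∃ c : F, d = C c := by
  set e1 := MvPolynomial.finSuccEquiv F 1
  set e0 := MvPolynomial.finSuccEquiv F 0
  have h1 : IsUnit (e1 d) := h.map e1
  obtain ⟨r, hr, hrd⟩ := Polynomial.isUnit_iff.mp h1
  have h0 : IsUnit (e0 r) := hr.map e0
  obtain ⟨s, hs, hsr⟩ := Polynomial.isUnit_iff.mp h0
  have hsC : s = C (s.coeff 0) := MvPolynomial.eq_C_of_isEmpty s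
  refine ⟨s.coeff 0, ?_⟩
  have hr' : r = C (s.coeff 0) := by
    have h := congrArg e0.symm hsr
    rw [AlgEquiv.symm_apply_apply] at h
    rw [← h]
    conv_lhs => rw [hsC]
    exact RingHom.congr_fun (MvPolynomial.finSuccEquiv_comp_C_eq_C 0) (s.coeff 0)
  have h := congrArg e1.symm hrd
  rw [AlgEquiv.symm_apply_apply] at h
  rw [← h]
  conv_lhs => rw [hr']
  exact RingHom.congr_fun (MvPolynomial.finSuccEquiv_comp_C_eq_C 1) (s.coeff 0)

lemma aux_totalDegree_eq_zero_of_isUnit {F : Type*} [Field F]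
    {d : MvPolynomial (Fin 2) F} (h : IsUnit d) : d.totalDegree = 0 := by
  obtain ⟨c, rfl⟩ := aux_eq_C_of_isUnit h
  exact totalDegree_C c

lemma aux_not_isUnit_of_pos {F : Type*} [Field F]
    {d : MvPolynomial (Fin 2) F} (h : 0 < d.totalDegree) : ¬IsUnit d := fun hu => by
  rw [aux_totalDegree_eq_zero_of_isUnit hu] at h; exact lt_irrefl 0 h

lemma aux_totalDegree_pos_of_irreducible {F : Type*} [Field F]
    {p : MvPolynomial (Fin 2) F} (hp : Irreducible p) : 0 < p.totalDegree := by
  rcases Nat.eq_zero_or_pos p.totalDegree with h | h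
  swap
  · exact h
  · refine absurd ?_ hp.not_isUnit
    have hC : p = C (p.coeff 0) := by
      ext m
      rcases eq_or_ne m 0 with rfl | hm
      · simp
      · rw [coeff_C, if_neg (Ne.symm hm)]
        by_contra hc
        have hmem : m ∈ p.support := by simpa [MvPolynomial.mem_support_iff] using hc
        have := (MvPolynomial.totalDegree_eq_zero_iff _ p).mp h m hmem
        exact hm (Finsupp.ext this)
    rw [hC]
    refine (isUnit_iff_ne_zero.mpr ?_).map (C : F →+* MvPolynomial (Fin 2) F)
    intro h0
    exact hp.ne_zero (by rw [hC, h0, map_zero])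

/-- If an irreducible `r` is periodic (`r ∼ σ^k r` for some `k > 0`), then `Dis σ r r = ⊤`. -/
lemma aux_dis_top {F : Type*} [Field F]
    (σ : MvPolynomial (Fin 2) F ≃ₐ[F] MvPolynomial (Fin 2) F)
    {r : MvPolynomial (Fin 2) F} (hr : Irreducible r) {k : ℕ} (hk : 0 < k)
    (hper : Associated r ((σ ^ k) r)) : Dis σ r r = ⊤ := by
  have hmul : ∀ j : ℕ, Associated r ((σ ^ (j * k)) r) := by
    intro j
    induction j with
    | zero => simpa using Associated.refl r
    | succ j ih =>
      have h1 : Associated ((σ ^ (j * k)) r) ((σ ^ (j * k)) ((σ ^ k) r)) :=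
        Associated.map (σ ^ (j * k)) hper
      have h2 : (σ ^ (j * k)) ((σ ^ k) r) = (σ ^ ((j + 1) * k)) r := by
        rw [add_mul, one_mul, pow_add]
        rfl
      exact ih.trans (h2 ▸ h1)
  have hmem : ∀ j : ℕ, j * k ∈ Spr σ r r :=
    fun j => ⟨r, aux_totalDegree_pos_of_irreducible hr, dvd_refl r, (hmul j).dvd⟩
  rw [Dis, sSup_eq_top]
  intro b hb
  induction b using WithBot.recBotCoe with
  | bot =>
    exact ⟨((0 : ℕ) : ℕ∞), ⟨0, by simpa using hmem 0, rfl⟩, by exact_mod_cast WithBot.bot_lt_coe (0 : ℕ∞)⟩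
  | coe c =>
    induction c using ENat.recTopCoe with
    | top => exact absurd hb (lt_irrefl _)
    | coe n =>
      refine ⟨(((n + 1) * k : ℕ) : ℕ∞), ⟨(n + 1) * k, hmem (n + 1), rfl⟩, ?_⟩
      have hlt : n < (n + 1) * k := by nlinarith
      exact_mod_cast hlt

theorem stmt11 {F : Type*} [Field F]
    (σ : MvPolynomial (Fin 2) F ≃ₐ[F] MvPolynomial (Fin 2) F)
    (hdeg : ∀ p : MvPolynomial (Fin 2) F, (σ p).totalDegree = p.totalDegree)
    (a b ainf abar binf bbar : MvPolynomial (Fin 2) F)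
    (ha0 : a ≠ 0) (hb0 : b ≠ 0)
    (ha : a = ainf * abar) (hb : b = binf * bbar)
    (hainf : ∀ d, Irreducible d → d ∣ ainf → Dis σ d d = ⊤)
    (habar : ∀ d, Irreducible d → d ∣ abar → Dis σ d d ≠ ⊤)
    (hbinf : ∀ d, Irreducible d → d ∣ binf → Dis σ d d = ⊤)
    (hbbar : ∀ d, Irreducible d → d ∣ bbar → Dis σ d d ≠ ⊤) :
    (Spr σ abar bbar).Finite := by
  classical
  by_contra hinf
  have hinf : (Spr σ abar bbar).Infinite := hinf
  have habar0 : abar ≠ 0 := fun h => ha0 (by rw [ha, h, mul_zero])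
  have hbbar0 : bbar ≠ 0 := fun h => hb0 (by rw [hb, h, mul_zero])
  let M := MvPolynomial (Fin 2) F
  let ta : Multiset M := UniqueFactorizationMonoid.factors abar
  let tb : Multiset M := UniqueFactorizationMonoid.factors bbar
  -- for each m in the spread choose a pair of irreducible factors of abar and bbar
  have key : ∀ m : ℕ, ∃ qr : M × M, m ∈ Spr σ abar bbar →
      qr.1 ∈ ta.toFinset ∧ qr.2 ∈ tb.toFinset ∧ Associated qr.1 ((σ ^ m) qr.2) := by
    intro m
    by_cases hm : m ∈ Spr σ abar bbar
    · obtain ⟨d, hdd, hda, hdb⟩ := hm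
      have hd0 : d ≠ 0 := by rintro rfl; simp at hdd
      obtain ⟨p, hp, hpd⟩ :=
        WfDvdMonoid.exists_irreducible_factor (aux_not_isUnit_of_pos hdd) hd0
      have hpa : p ∣ abar := hpd.trans hda
      have hpb : p ∣ (σ ^ m) bbar := hpd.trans hdb
      -- pull back along σ^m
      have hp' : Irreducible ((σ ^ m).symm p) := Irreducible.map (σ ^ m).symm hp
      have hpb' : (σ ^ m).symm p ∣ bbar := by
        have := map_dvd ((σ ^ m).symm : M →ₐ[F] M) hpb
        simpa [-AlgEquiv.coe_pow] using this
      obtain ⟨q, hq, hpq⟩ :=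
        UniqueFactorizationMonoid.exists_mem_factors_of_dvd habar0 hp hpa
      obtain ⟨r, hrmem, hpr⟩ :=
        UniqueFactorizationMonoid.exists_mem_factors_of_dvd hbbar0 hp' hpb'
      refine ⟨(q, r), fun _ => ⟨Multiset.mem_toFinset.mpr hq, Multiset.mem_toFinset.mpr hrmem, ?_⟩⟩
      -- q ~ p ~ σ^m ((σ^m).symm p) ~ σ^m r
      have h1 : Associated ((σ ^ m) ((σ ^ m).symm p)) ((σ ^ m) r) :=
        Associated.map (σ ^ m) hpr
      rw [AlgEquiv.apply_symm_apply] at h1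
      exact hpq.symm.trans h1
    · exact ⟨(0, 0), fun h => absurd h hm⟩
  choose f hf using key
  have hmaps : Set.MapsTo f (Spr σ abar bbar) ((ta.toFinset ×ˢ tb.toFinset : Finset (M × M)) : Set (M × M)) := by
    intro m hm
    obtain ⟨h1, h2, _⟩ := hf m hm
    exact Finset.mem_coe.mpr (Finset.mem_product.mpr ⟨h1, h2⟩)
  obtain ⟨m, hm, m', hm', hne, heq⟩ :=
    hinf.exists_ne_map_eq_of_mapsTo hmaps (Finset.finite_toSet _)
  -- wlog m < m'
  wlog hlt : m < m' generalizing m m'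
  · exact this m' hm' m hm hne.symm heq.symm (by omega)
  obtain ⟨_, hr2, hassoc⟩ := hf m hm
  obtain ⟨_, _, hassoc'⟩ := hf m' hm'
  set r : M := (f m).2 with hrdef
  have hr : r ∈ tb.toFinset := hr2
  have hassoc'' : Associated (f m).1 ((σ ^ m') r) := by
    rw [hrdef, heq]; exact hassoc'
  -- so σ^m r ~ σ^m' r, hence r ~ σ^(m'-m) r
  have h3 : Associated ((σ ^ m) r) ((σ ^ m') r) := hassoc.symm.trans hassoc''
  have h4 : Associated r (((σ ^ m).symm) ((σ ^ m') r)) := by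
    have := Associated.map ((σ ^ m).symm) h3
    simpa [-AlgEquiv.coe_pow] using this
  have h5 : ((σ ^ m).symm) ((σ ^ m') r) = (σ ^ (m' - m)) r := by
    rw [AlgEquiv.symm_apply_eq]
    have : (σ ^ m) ((σ ^ (m' - m)) r) = ((σ ^ m) * (σ ^ (m' - m))) r := rfl
    rw [this, ← pow_add, Nat.add_sub_cancel' hlt.le]
  rw [h5] at h4
  have hrirr : Irreducible r :=
    UniqueFactorizationMonoid.irreducible_of_factor r (Multiset.mem_toFinset.mp hr)
  have hrd : r ∣ bbar :=
    UniqueFactorizationMonoid.dvd_of_mem_factors (Multiset.mem_toFinset.mp hr)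
  exact hbbar r hrirr hrd (aux_dis_top σ hrirr (by omega) h4)
end

section
/- Let σ be a degree-preserving automorphism of F(α,β), a, b ∈ F, A, B, C ∈ F[α,β] with gcd(Ā, σ^h(B̄)) = 1 for all h ∈ ℕ (where Ā, B̄ are the finite parts of A, B). Suppose x = p/q with p, q ∈ F[α,β] coprime satisfies a·A·σ(x) + b·σ⁻¹(B)·x = C. Then the finite part q̄ of the splitting factorization of q is a constant, i.e., every nonconstant irreducible factor of q has infinite dispersion. -/
open MvPolynomial


open MvPolynomial

section Aux13
variable {F : Type*} [Field F]
  (σ : MvPolynomial (Fin 2) F ≃ₐ[F] MvPolynomial (Fin 2) F)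

lemma aux13_zpow_apply_add (j k : ℤ) (x : MvPolynomial (Fin 2) F) :
    (σ ^ j) ((σ ^ k) x) = (σ ^ (j + k)) x := by
  rw [← AlgEquiv.mul_apply, ← zpow_add]

lemma aux13_dvd_zpow_iff (k : ℤ) {x y : MvPolynomial (Fin 2) F} :
    (σ ^ k) x ∣ (σ ^ k) y ↔ x ∣ y := by
  constructor
  · intro h
    have h2 := map_dvd (σ ^ (-k)) h
    rwa [aux13_zpow_apply_add, aux13_zpow_apply_add, neg_add_cancel, zpow_zero,
      AlgEquiv.one_apply, AlgEquiv.one_apply] at h2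
  · exact fun h => map_dvd _ h

lemma aux13_totalDegree_pos {p : MvPolynomial (Fin 2) F} (hp : Irreducible p) :
    0 < p.totalDegree := by
  rcases Nat.eq_zero_or_pos p.totalDegree with h | h
  · exfalso
    have hC : p = C (coeff 0 p) := by
      ext m
      rcases eq_or_ne m 0 with rfl | hm
      · simp
      · rw [coeff_C, if_neg (Ne.symm hm)]
        by_contra hc
        obtain ⟨x, hx⟩ : ∃ x, m x ≠ 0 := by
          by_contra h'
          push_neg at h'
          exact hm (Finsupp.ext h')
        exact hx ((totalDegree_eq_zero_iff _ p).mp h m (mem_support_iff.mpr hc) x)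
    obtain ⟨c, rfl⟩ : ∃ c, p = C c := ⟨_, hC⟩
    have hc0 : c ≠ 0 := fun h0 => hp.ne_zero (by rw [h0, map_zero])
    exact hp.not_isUnit (IsUnit.of_mul_eq_one (C c⁻¹)
      (by rw [← C_mul, mul_inv_cancel₀ hc0, C_1]))
  · exact h

lemma aux13_totalDegree_zpow
    (hdeg : ∀ p : MvPolynomial (Fin 2) F, (σ p).totalDegree = p.totalDegree)
    (k : ℤ) (p : MvPolynomial (Fin 2) F) :
    ((σ ^ k) p).totalDegree = p.totalDegree := by
  have hsymm : ∀ p : MvPolynomial (Fin 2) F, (σ.symm p).totalDegree = p.totalDegree := by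
    intro p
    conv_rhs => rw [← σ.apply_symm_apply p, hdeg]
  induction k using Int.induction_on with
  | zero => rw [zpow_zero, AlgEquiv.one_apply]
  | succ n ih =>
      rw [show ((n : ℤ) + 1) = 1 + (n : ℤ) by ring, ← aux13_zpow_apply_add, zpow_one, hdeg, ih]
  | pred n ih =>
      rw [show (-(n : ℤ) - 1) = (-1) + (-(n : ℤ)) by ring, ← aux13_zpow_apply_add, zpow_neg_one]
      show (σ.symm _).totalDegree = _
      rw [hsymm, ih]

lemma aux13_sSup_eq_top {S : Set ℕ} (h : ∀ N : ℕ, ∃ m, N ≤ m ∧ m ∈ S) :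
    sSup ((fun m : ℕ => ((m : ℕ∞) : WithBot ℕ∞)) '' S) = ⊤ := by
  rw [sSup_eq_top]
  intro b hb
  induction b with
  | bot =>
      obtain ⟨m, _, hm⟩ := h 0
      exact ⟨_, ⟨m, hm, rfl⟩, WithBot.bot_lt_coe _⟩
  | coe c =>
      have hc : c ≠ ⊤ := by
        rintro rfl
        exact absurd hb (lt_irrefl _)
      obtain ⟨n, rfl⟩ : ∃ n : ℕ, c = (n : ℕ∞) := by
        lift c to ℕ using hc
        exact ⟨c, rfl⟩
      obtain ⟨m, hm, hmS⟩ := h (n + 1)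
      refine ⟨_, ⟨m, hmS, rfl⟩, ?_⟩
      rw [WithBot.coe_lt_coe]
      exact_mod_cast Nat.lt_of_lt_of_le (Nat.lt_succ_self n) hm

lemma aux13_Spr_zpow
    (hdeg : ∀ p : MvPolynomial (Fin 2) F, (σ p).totalDegree = p.totalDegree)
    (k : ℤ) (t : MvPolynomial (Fin 2) F) :
    Spr σ ((σ ^ k) t) ((σ ^ k) t) = Spr σ t t := by
  ext m
  simp only [Spr, Set.mem_setOf_eq]
  constructor
  · rintro ⟨e, he, h1, h2⟩
    refine ⟨(σ ^ (-k)) e, by rw [aux13_totalDegree_zpow σ hdeg]; exact he, ?_, ?_⟩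
    · have h3 := map_dvd (σ ^ (-k)) h1
      rwa [aux13_zpow_apply_add, neg_add_cancel, zpow_zero, AlgEquiv.one_apply] at h3
    · rw [← zpow_natCast σ m] at h2 ⊢
      rw [aux13_zpow_apply_add] at h2
      have h3 := map_dvd (σ ^ (-k)) h2
      rwa [aux13_zpow_apply_add, show -k + ((m : ℤ) + k) = (m : ℤ) by ring] at h3
  · rintro ⟨e, he, h1, h2⟩
    refine ⟨(σ ^ k) e, by rw [aux13_totalDegree_zpow σ hdeg]; exact he, map_dvd _ h1, ?_⟩
    rw [← zpow_natCast σ m] at h2 ⊢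
    rw [aux13_zpow_apply_add]
    have h3 := map_dvd (σ ^ k) h2
    rwa [aux13_zpow_apply_add, add_comm k (m : ℤ)] at h3

lemma aux13_Dis_zpow
    (hdeg : ∀ p : MvPolynomial (Fin 2) F, (σ p).totalDegree = p.totalDegree)
    (k : ℤ) (t : MvPolynomial (Fin 2) F) :
    Dis σ ((σ ^ k) t) ((σ ^ k) t) = Dis σ t t := by
  unfold Dis
  rw [aux13_Spr_zpow σ hdeg]

lemma aux13_assoc_inj
    (hdeg : ∀ p : MvPolynomial (Fin 2) F, (σ p).totalDegree = p.totalDegree)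
    {t : MvPolynomial (Fin 2) F} (ht : Irreducible t) (hfin : Dis σ t t ≠ ⊤) :
    ∀ j k : ℤ, Associated ((σ ^ j) t) ((σ ^ k) t) → j = k := by
  have main : ∀ n : ℤ, 0 < n → ¬ Associated t ((σ ^ n) t) := by
    intro n hn hassoc
    apply hfin
    unfold Dis
    apply aux13_sSup_eq_top
    intro N
    have hiter : ∀ i : ℕ, Associated t ((σ ^ (n * i)) t) := by
      intro i
      induction i with
      | zero => simpa using Associated.refl t
      | succ i ih =>
          have h2 := (ih.map (σ ^ n)).trans (Associated.refl _)
          rw [aux13_zpow_apply_add] at h2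
          have h3 := hassoc.trans h2
          rwa [show n + n * (i : ℤ) = n * ((i : ℕ) + 1 : ℕ) by push_cast; ring] at h3
    set m := (n * (N + 1 : ℕ)).toNat with hm
    have hmz : (m : ℤ) = n * (N + 1 : ℕ) := Int.toNat_of_nonneg (by positivity)
    refine ⟨m, ?_, t, aux13_totalDegree_pos ht, dvd_refl t, ?_⟩
    · have : (N : ℤ) < n * (N + 1 : ℕ) := by
        have : (1 : ℤ) ≤ n := hn
        push_cast
        nlinarith
      omega
    · have h4 := hiter (N + 1)
      rw [← hmz] at h4
      rw [← zpow_natCast σ m]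
      exact h4.dvd
  intro j k hassoc
  rcases lt_trichotomy j k with h | h | h
  · exfalso
    have h5 := hassoc.map (σ ^ (-j))
    rw [aux13_zpow_apply_add, aux13_zpow_apply_add, neg_add_cancel, zpow_zero,
      AlgEquiv.one_apply] at h5
    exact main (-j + k) (by omega) h5
  · exact h
  · exfalso
    have h5 := hassoc.symm.map (σ ^ (-k))
    rw [aux13_zpow_apply_add, aux13_zpow_apply_add, neg_add_cancel, zpow_zero,
      AlgEquiv.one_apply] at h5
    exact main (-k + j) (by omega) h5

end Aux13
theorem stmt13 {F : Type*} [Field F] (u v : F) (hu : u ≠ 0)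
    (σ : MvPolynomial (Fin 2) F ≃ₐ[F] MvPolynomial (Fin 2) F)
    (hα : σ (X 0) = X 1) (hβ : σ (X 1) = C u * X 0 + C v * X 1)
    (hdeg : ∀ p : MvPolynomial (Fin 2) F, (σ p).totalDegree = p.totalDegree)
    (K : Type*) [Field K] [Algebra (MvPolynomial (Fin 2) F) K]
    [IsFractionRing (MvPolynomial (Fin 2) F) K]
    (τ : K ≃+* K)
    (hτ : ∀ p : MvPolynomial (Fin 2) F,
      τ (algebraMap (MvPolynomial (Fin 2) F) K p) = algebraMap (MvPolynomial (Fin 2) F) K (σ p))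
    (a b : F) (ha : a ≠ 0) (hb : b ≠ 0)
    (A B C' : MvPolynomial (Fin 2) F) (hA0 : A ≠ 0) (hB0 : B ≠ 0) (hC0 : C' ≠ 0)
    (Ainf Abar Binf Bbar : MvPolynomial (Fin 2) F)
    (hA : A = Ainf * Abar) (hB : B = Binf * Bbar)
    (hAinf : ∀ d, Irreducible d → d ∣ Ainf → Dis σ d d = ⊤)
    (hAbar : ∀ d, Irreducible d → d ∣ Abar → Dis σ d d ≠ ⊤)
    (hBinf : ∀ d, Irreducible d → d ∣ Binf → Dis σ d d = ⊤)
    (hBbar : ∀ d, Irreducible d → d ∣ Bbar → Dis σ d d ≠ ⊤)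
    (hcop : ∀ h : ℕ, ∀ d : MvPolynomial (Fin 2) F, d ∣ Abar → d ∣ (σ ^ h) Bbar → IsUnit d)
    (p q : MvPolynomial (Fin 2) F) (hq : q ≠ 0)
    (hpq : ∀ d : MvPolynomial (Fin 2) F, d ∣ p → d ∣ q → IsUnit d)
    (heq :
      algebraMap (MvPolynomial (Fin 2) F) K (C a * A) *
          τ (algebraMap (MvPolynomial (Fin 2) F) K p / algebraMap (MvPolynomial (Fin 2) F) K q) +
        algebraMap (MvPolynomial (Fin 2) F) K (C b * σ.symm B) *
          (algebraMap (MvPolynomial (Fin 2) F) K p / algebraMap (MvPolynomial (Fin 2) F) K q) =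
        algebraMap (MvPolynomial (Fin 2) F) K C') :
    ∀ d : MvPolynomial (Fin 2) F, Irreducible d → d ∣ q → Dis σ d d = ⊤ := by
  classical
  intro d hd hdq
  by_contra hfin
  -- the key polynomial identity
  have hinj : Function.Injective (algebraMap (MvPolynomial (Fin 2) F) K) :=
    IsFractionRing.injective _ _
  have hφq : algebraMap (MvPolynomial (Fin 2) F) K q ≠ 0 :=
    fun h => hq (hinj (by rw [h, map_zero]))
  have hσq0 : σ q ≠ 0 := fun h => hq (by simpa using congrArg σ.symm h)
  have hφσq : algebraMap (MvPolynomial (Fin 2) F) K (σ q) ≠ 0 :=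
    fun h => hσq0 (hinj (by rw [h, map_zero]))
  have hτx : τ (algebraMap (MvPolynomial (Fin 2) F) K p /
      algebraMap (MvPolynomial (Fin 2) F) K q) =
      algebraMap (MvPolynomial (Fin 2) F) K (σ p) /
      algebraMap (MvPolynomial (Fin 2) F) K (σ q) := by
    rw [map_div₀, hτ, hτ]
  rw [hτx] at heq
  have key : C a * A * σ p * q + C b * σ.symm B * (p * σ q) = C' * (q * σ q) := by
    apply hinj
    simp only [map_add, map_mul]
    field_simp at heq
    simp only [map_mul] at heq
    linear_combination heq
  -- basic facts
  have hσ1 : ∀ x : MvPolynomial (Fin 2) F, σ x = (σ ^ (1 : ℤ)) x := fun x => by rw [zpow_one]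
  have hirr : ∀ j : ℤ, Irreducible ((σ ^ j) d) :=
    fun j => (MulEquiv.irreducible_iff (σ ^ j)).mpr hd
  have hprime : ∀ j : ℤ, Prime ((σ ^ j) d) :=
    fun j => UniqueFactorizationMonoid.irreducible_iff_prime.mp (hirr j)
  have hdist : ∀ j k : ℤ, Associated ((σ ^ j) d) ((σ ^ k) d) → j = k :=
    aux13_assoc_inj σ hdeg hd hfin
  have hDis : ∀ j : ℤ, Dis σ ((σ ^ j) d) ((σ ^ j) d) = Dis σ d d :=
    fun j => aux13_Dis_zpow σ hdeg j d
  -- the set of integer shifts of d dividing q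
  set J : Set ℤ := {j | (σ ^ j) d ∣ q} with hJdef
  have h0J : (0 : ℤ) ∈ J := by
    show (σ ^ (0 : ℤ)) d ∣ q
    rwa [zpow_zero, AlgEquiv.one_apply]
  have hJfin : J.Finite := by
    letI : NormalizationMonoid (MvPolynomial (Fin 2) F) :=
      UniqueFactorizationMonoid.normalizationMonoid.toNormalizationMonoid
    have hmap : ∀ j ∈ J, ∃ r ∈ UniqueFactorizationMonoid.normalizedFactors q,
        Associated ((σ ^ j) d) r := fun j hj =>
      UniqueFactorizationMonoid.exists_mem_normalizedFactors_of_dvd hq (hirr j) hj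
    choose f hf1 hf2 using hmap
    set g : ℤ → MvPolynomial (Fin 2) F := fun j => if h : j ∈ J then f j h else 1 with hg
    have hinjOn : Set.InjOn g J := by
      intro j hj j' hj' hgeq
      simp only [hg, dif_pos hj, dif_pos hj'] at hgeq
      exact hdist j j' ((hf2 j hj).trans (hgeq ▸ (hf2 j' hj').symm))
    apply Set.Finite.of_finite_image ?_ hinjOn
    apply Set.Finite.subset
      (Multiset.finite_toSet (UniqueFactorizationMonoid.normalizedFactors q))
    rintro x ⟨j, hj, rfl⟩
    simp only [hg, dif_pos hj]
    exact hf1 j hj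
  have hne : hJfin.toFinset.Nonempty := ⟨0, hJfin.mem_toFinset.mpr h0J⟩
  set M := hJfin.toFinset.max' hne with hMdef
  set L := hJfin.toFinset.min' hne with hLdef
  have hMJ : (σ ^ M) d ∣ q := hJfin.mem_toFinset.mp (hJfin.toFinset.max'_mem hne)
  have hLJ : (σ ^ L) d ∣ q := hJfin.mem_toFinset.mp (hJfin.toFinset.min'_mem hne)
  have hMmax : ∀ j : ℤ, (σ ^ j) d ∣ q → j ≤ M :=
    fun j hj => Finset.le_max' _ j (hJfin.mem_toFinset.mpr hj)
  have hLmin : ∀ j : ℤ, (σ ^ j) d ∣ q → L ≤ j :=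
    fun j hj => Finset.min'_le _ j (hJfin.mem_toFinset.mpr hj)
  have hLM : L ≤ M := hLmin M hMJ
  -- the maximal shift: σ^(M+1) d divides Abar
  have hM1 : (σ ^ (M + 1)) d ∣ σ q := by
    have h3 := map_dvd σ hMJ
    rwa [hσ1 ((σ ^ M) d), aux13_zpow_apply_add, add_comm 1 M] at h3
  have hPAbar : (σ ^ (M + 1)) d ∣ Abar := by
    have h1 : (σ ^ (M + 1)) d ∣ C' * (q * σ q) := by
      rw [← mul_assoc]; exact hM1.mul_left _
    have h2 : (σ ^ (M + 1)) d ∣ C b * σ.symm B * (p * σ q) := by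
      rw [show C b * σ.symm B * (p * σ q) = C b * σ.symm B * p * σ q by ring]
      exact hM1.mul_left _
    have hPdvd : (σ ^ (M + 1)) d ∣ C a * A * σ p * q := by
      have h3 := dvd_sub h1 h2
      rwa [show C' * (q * σ q) - C b * σ.symm B * (p * σ q) = C a * A * σ p * q from by
        rw [← key]; ring] at h3
    rcases (hprime (M + 1)).dvd_mul.mp hPdvd with h3 | h3
    · rcases (hprime (M + 1)).dvd_mul.mp h3 with h4 | h4
      · rcases (hprime (M + 1)).dvd_mul.mp h4 with h5 | h5
        · exact absurd
            (isUnit_of_dvd_unit h5 (IsUnit.of_mul_eq_one (C a⁻¹)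
              (by rw [← C_mul, mul_inv_cancel₀ ha, C_1])))
            (hirr (M + 1)).not_isUnit
        · rw [hA] at h5
          rcases (hprime (M + 1)).dvd_mul.mp h5 with h6 | h6
          · exact absurd ((hDis (M + 1)) ▸ hAinf _ (hirr (M + 1)) h6) hfin
          · exact h6
      · exfalso
        rw [hσ1 p] at h4
        rw [show (σ ^ (M + 1)) d = (σ ^ (1 : ℤ)) ((σ ^ M) d) from by
          rw [aux13_zpow_apply_add, add_comm 1 M]] at h4
        exact (hirr M).not_isUnit (hpq _ ((aux13_dvd_zpow_iff σ 1).mp h4) hMJ)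
    · exact absurd (hMmax (M + 1) h3) (by omega)
  -- the minimal shift: σ^(L+1) d divides Bbar
  have hQBbar : (σ ^ (L + 1)) d ∣ Bbar := by
    have h1 : (σ ^ L) d ∣ C' * (q * σ q) := by
      rw [show C' * (q * σ q) = C' * σ q * q by ring]
      exact hLJ.mul_left _
    have h2 : (σ ^ L) d ∣ C a * A * σ p * q := hLJ.mul_left _
    have hQdvd : (σ ^ L) d ∣ C b * σ.symm B * (p * σ q) := by
      have h3 := dvd_sub h1 h2
      rwa [show C' * (q * σ q) - C a * A * σ p * q = C b * σ.symm B * (p * σ q) from by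
        rw [← key]; ring] at h3
    have hQB : (σ ^ L) d ∣ σ.symm B := by
      rcases (hprime L).dvd_mul.mp hQdvd with h3 | h3
      · rcases (hprime L).dvd_mul.mp h3 with h4 | h4
        · exact absurd
            (isUnit_of_dvd_unit h4 (IsUnit.of_mul_eq_one (C b⁻¹)
              (by rw [← C_mul, mul_inv_cancel₀ hb, C_1])))
            (hirr L).not_isUnit
        · exact h4
      · rcases (hprime L).dvd_mul.mp h3 with h4 | h4
        · exact absurd (hpq _ h4 hLJ) (hirr L).not_isUnit
        · exfalso
          rw [hσ1 q] at h4
          rw [show (σ ^ L) d = (σ ^ (1 : ℤ)) ((σ ^ (L - 1)) d) from by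
            rw [aux13_zpow_apply_add]; ring_nf] at h4
          have h5 := (aux13_dvd_zpow_iff σ 1).mp h4
          have h6 := hLmin (L - 1) h5
          omega
    -- σ.symm B = σ^(-1) B
    have hsymmB : σ.symm B = (σ ^ (-1 : ℤ)) B := by rw [zpow_neg_one]; rfl
    rw [hsymmB, hB, map_mul] at hQB
    have hlift : ∀ X : MvPolynomial (Fin 2) F,
        (σ ^ L) d ∣ (σ ^ (-1 : ℤ)) X → (σ ^ (L + 1)) d ∣ X := by
      intro X hX
      have h3 := map_dvd (σ ^ (1 : ℤ)) hX
      rwa [aux13_zpow_apply_add, aux13_zpow_apply_add, add_comm 1 L,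
        show (1 : ℤ) + -1 = 0 by ring, zpow_zero, AlgEquiv.one_apply] at h3
    rcases (hprime L).dvd_mul.mp hQB with h3 | h3
    · exact absurd ((hDis (L + 1)) ▸ hBinf _ (hirr (L + 1)) (hlift _ h3)) hfin
    · exact hlift _ h3
  -- contradiction with coprimality of Abar and shifts of Bbar
  set h : ℕ := (M - L).toNat with hh
  have hcast : (h : ℤ) = M - L := Int.toNat_of_nonneg (by omega)
  have hdvd2 : (σ ^ (M + 1)) d ∣ (σ ^ h) Bbar := by
    have h4 := map_dvd (σ ^ (M - L)) hQBbar
    rw [aux13_zpow_apply_add, show M - L + (L + 1) = M + 1 by ring] at h4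
    rwa [show (σ ^ (M - L)) Bbar = (σ ^ h) Bbar from by rw [← hcast, zpow_natCast]] at h4
  exact (hirr (M + 1)).not_isUnit (hcop h _ hPAbar hdvd2)
end

section
/- Given a nonzero rational function r ∈ F(α,β) and a degree-preserving automorphism σ, there exist polynomials A, B, C ∈ F[α,β] such that r = (A/B)·(σ(C)/C), gcd(Ā, σ^h(B̄)) = 1 for every h ∈ ℕ, gcd(A, C) = 1, and gcd(B, σ(C)) = 1, where Ā, B̄ denote the finite parts of A and B. -/
open MvPolynomial


open MvPolynomial

section Helpers
variable {F : Type*} [Field F] (σ : MvPolynomial (Fin 2) F ≃ₐ[F] MvPolynomial (Fin 2) F)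

lemma pow_apply_swap (m : ℕ) (x : MvPolynomial (Fin 2) F) :
    (σ ^ m) (σ x) = σ ((σ ^ m) x) := by
  rw [← AlgEquiv.mul_apply, ← AlgEquiv.mul_apply, pow_mul_comm']

lemma Spr_sigma (hdeg : ∀ p : MvPolynomial (Fin 2) F, (σ p).totalDegree = p.totalDegree)
    (p q : MvPolynomial (Fin 2) F) : Spr σ (σ p) (σ q) = Spr σ p q := by
  ext m
  simp only [Spr, Set.mem_setOf_eq]
  constructor
  · rintro ⟨d, hd, h1, h2⟩
    refine ⟨σ.symm d, ?_, ?_, ?_⟩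
    · have h := hdeg (σ.symm d); rw [σ.apply_symm_apply] at h; rw [← h]; exact hd
    · have h := map_dvd σ.symm h1; rwa [σ.symm_apply_apply] at h
    · rw [pow_apply_swap] at h2
      have h := map_dvd σ.symm h2; rwa [σ.symm_apply_apply] at h
  · rintro ⟨d, hd, h1, h2⟩
    exact ⟨σ d, by rw [hdeg]; exact hd, map_dvd σ h1,
      by rw [pow_apply_swap]; exact map_dvd σ h2⟩

lemma Dis_sigma (hdeg : ∀ p : MvPolynomial (Fin 2) F, (σ p).totalDegree = p.totalDegree)
    (e : MvPolynomial (Fin 2) F) : Dis σ (σ e) (σ e) = Dis σ e e := by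
  unfold Dis; rw [Spr_sigma σ hdeg]

lemma Dis_pow (hdeg : ∀ p : MvPolynomial (Fin 2) F, (σ p).totalDegree = p.totalDegree)
    (k : ℕ) (e : MvPolynomial (Fin 2) F) : Dis σ ((σ ^ k) e) ((σ ^ k) e) = Dis σ e e := by
  induction k with
  | zero => simp
  | succ k ih =>
    have : (σ ^ (k + 1)) e = σ ((σ ^ k) e) := by
      rw [pow_succ']; rfl
    rw [this, Dis_sigma σ hdeg, ih]

lemma Dis_symm (hdeg : ∀ p : MvPolynomial (Fin 2) F, (σ p).totalDegree = p.totalDegree)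
    (e : MvPolynomial (Fin 2) F) : Dis σ (σ.symm e) (σ.symm e) = Dis σ e e := by
  have h := Dis_sigma σ hdeg (σ.symm e)
  rw [σ.apply_symm_apply] at h
  exact h.symm

lemma Spr_assoc {d p : MvPolynomial (Fin 2) F} (h : Associated d p) :
    Spr σ d d = Spr σ p p := by
  ext m
  simp only [Spr, Set.mem_setOf_eq]
  constructor
  · rintro ⟨e, he, h1, h2⟩
    exact ⟨e, he, h1.trans h.dvd,
      h2.trans (h.map (σ ^ m : MvPolynomial (Fin 2) F ≃ₐ[F] MvPolynomial (Fin 2) F)).dvd⟩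
  · rintro ⟨e, he, h1, h2⟩
    exact ⟨e, he, h1.trans h.symm.dvd,
      h2.trans (h.map (σ ^ m : MvPolynomial (Fin 2) F ≃ₐ[F] MvPolynomial (Fin 2) F)).symm.dvd⟩

lemma Dis_assoc {d p : MvPolynomial (Fin 2) F} (h : Associated d p) :
    Dis σ d d = Dis σ p p := by
  unfold Dis; rw [Spr_assoc σ h]

lemma split (p : MvPolynomial (Fin 2) F) (hp : p ≠ 0) :
    ∃ pi pb : MvPolynomial (Fin 2) F, p = pi * pb ∧ pi ≠ 0 ∧ pb ≠ 0 ∧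
      (∀ d, Irreducible d → d ∣ pi → Dis σ d d = ⊤) ∧
      (∀ d, Irreducible d → d ∣ pb → Dis σ d d ≠ ⊤) := by
  induction p using UniqueFactorizationMonoid.induction_on_prime with
  | h₁ => exact absurd rfl hp
  | h₂ x hx =>
    exact ⟨x, 1, (mul_one x).symm, hx.ne_zero, one_ne_zero,
      fun d hd hdvd => absurd (isUnit_of_dvd_unit hdvd hx) hd.not_isUnit,
      fun d hd hdvd => absurd (isUnit_of_dvd_one hdvd) hd.not_isUnit⟩
  | h₃ a x ha0 hx ih =>
    obtain ⟨pi, pb, hsplit, hpi, hpb, h4, h5⟩ := ih ha0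
    by_cases hD : Dis σ x x = ⊤
    · refine ⟨x * pi, pb, by rw [hsplit]; ring, mul_ne_zero hx.ne_zero hpi, hpb, ?_, h5⟩
      intro d hd hdvd
      have hprime : Prime d := UniqueFactorizationMonoid.irreducible_iff_prime.mp hd
      rcases hprime.dvd_or_dvd hdvd with h | h
      · rw [Dis_assoc σ (hd.associated_of_dvd hx.irreducible h)]; exact hD
      · exact h4 d hd h
    · refine ⟨pi, x * pb, by rw [hsplit]; ring, hpi, mul_ne_zero hx.ne_zero hpb, h4, ?_⟩
      intro d hd hdvd
      have hprime : Prime d := UniqueFactorizationMonoid.irreducible_iff_prime.mp hd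
      rcases hprime.dvd_or_dvd hdvd with h | h
      · rw [Dis_assoc σ (hd.associated_of_dvd hx.irreducible h)]; exact hD
      · exact h5 d hd h

end Helpers

section GP
variable {F : Type*} [Field F] (σ : MvPolynomial (Fin 2) F ≃ₐ[F] MvPolynomial (Fin 2) F)

open UniqueFactorizationMonoid in
lemma gp (n : ℕ) : ∀ (p q : MvPolynomial (Fin 2) F), p ≠ 0 → q ≠ 0 →
    Multiset.card (factors p) ≤ n →
    ∃ a b c : MvPolynomial (Fin 2) F, a ≠ 0 ∧ b ≠ 0 ∧ c ≠ 0 ∧ a ∣ p ∧ b ∣ q ∧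
      p * b * c = q * a * σ c ∧
      (∀ e, Irreducible e → e ∣ c → ∃ i : ℕ, (σ ^ i) e ∣ p) ∧
      (∀ h : ℕ, ∀ d, d ∣ a → d ∣ (σ ^ h) b → IsUnit d) ∧
      (∀ d, d ∣ a → d ∣ c → IsUnit d) ∧
      (∀ d, d ∣ b → d ∣ σ c → IsUnit d) := by
  induction n using Nat.strong_induction_on with
  | _ n IH =>
  intro p q hp hq hcard
  by_cases hS : (Set.Nonempty {m : ℕ | ∃ d, ¬IsUnit d ∧ d ∣ p ∧ d ∣ (σ ^ m) q})
  swap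
  · -- spread empty: take a = p, b = q, c = 1
    refine ⟨p, q, 1, hp, hq, one_ne_zero, dvd_rfl, dvd_rfl, by rw [map_one]; ring,
      ?_, ?_, ?_, ?_⟩
    · intro e he hec
      exact absurd (isUnit_of_dvd_one hec) he.not_isUnit
    · intro h d hda hdb
      by_contra hd
      exact hS ⟨h, d, hd, hda, hdb⟩
    · intro d _ hdc; exact isUnit_of_dvd_one hdc
    · intro d _ hdc; rw [map_one] at hdc; exact isUnit_of_dvd_one hdc
  · set S : Set ℕ := {m : ℕ | ∃ d, ¬IsUnit d ∧ d ∣ p ∧ d ∣ (σ ^ m) q} with hSdef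
    set h : ℕ := sInf S with hh
    have hhS : h ∈ S := Nat.sInf_mem hS
    obtain ⟨d₀, hd₀u, hd₀p, hd₀q⟩ := hhS
    have hd₀0 : d₀ ≠ 0 := ne_zero_of_dvd_ne_zero hp hd₀p
    obtain ⟨g, hgirr, hgd⟩ := WfDvdMonoid.exists_irreducible_factor hd₀u hd₀0
    have hg0 : g ≠ 0 := hgirr.ne_zero
    have hgp : g ∣ p := hgd.trans hd₀p
    have hgq : g ∣ (σ ^ h) q := hgd.trans hd₀q
    obtain ⟨p', hp'⟩ := id hgp
    have hp'0 : p' ≠ 0 := by rintro rfl; rw [mul_zero] at hp'; exact hp hp'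
    have hq' : (σ ^ h).symm g ∣ q := by
      have := map_dvd (σ ^ h).symm hgq
      rwa [(σ ^ h).symm_apply_apply] at this
    obtain ⟨q'', hq''⟩ := hq'
    have hq''0 : q'' ≠ 0 := by
      rintro rfl; rw [mul_zero] at hq''; exact hq hq''
    -- cardinality decrease
    have hcard' : Multiset.card (factors p') < n := by
      have hrel := UniqueFactorizationMonoid.factors_mul hg0 hp'0
      have hc : Multiset.card (factors (g * p')) =
          Multiset.card (factors g) + Multiset.card (factors p') := by
        rw [Multiset.card_eq_card_of_rel hrel, Multiset.card_add]
      obtain ⟨x, hx⟩ := UniqueFactorizationMonoid.exists_mem_factors hg0 hgirr.not_isUnit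
      have hgpos : 0 < Multiset.card (factors g) := Multiset.card_pos_iff_exists_mem.mpr ⟨x, hx⟩
      have : Multiset.card (factors p) = Multiset.card (factors (g * p')) := by rw [← hp']
      omega
    obtain ⟨a, b, c', ha0, hb0, hc'0, hap, hbq, heq, hcf, hi, hii, hiii⟩ :=
      IH (Multiset.card (factors p')) hcard' p' q'' hp'0 hq''0 le_rfl
    -- the telescoping factor
    set D : ℕ → MvPolynomial (Fin 2) F := fun i => (σ ^ i).symm g with hD
    have hD0 : ∀ i, D i ≠ 0 := by
      intro i hzero
      apply hg0
      rw [← (σ ^ i).apply_symm_apply g]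
      rw [show (σ ^ i).symm g = D i from rfl, hzero, map_zero]
    have hDapp : ∀ i, (σ ^ i) (D i) = g := fun i => (σ ^ i).apply_symm_apply g
    have fact1 : ∀ i, σ (D (i + 1)) = D i := by
      intro i
      apply (σ ^ i).injective
      have h1 : (σ ^ i) (σ (D (i + 1))) = (σ ^ (i + 1)) (D (i + 1)) := by
        rw [pow_succ]; rfl
      rw [h1, hDapp, hDapp]
    set c₀ : MvPolynomial (Fin 2) F := ∏ i ∈ Finset.range h, D (i + 1) with hc₀
    have hc₀0 : c₀ ≠ 0 := Finset.prod_ne_zero_iff.mpr fun i _ => hD0 (i + 1)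
    have fact2 : σ c₀ = ∏ i ∈ Finset.range h, D i := by
      rw [hc₀, map_prod]
      exact Finset.prod_congr rfl fun i _ => fact1 i
    have hD0g : D 0 = g := by
      have := hDapp 0; rwa [pow_zero, AlgEquiv.one_apply] at this
    have fact3 : g * c₀ = σ c₀ * D h := by
      calc g * c₀ = (∏ i ∈ Finset.range h, D (i + 1)) * D 0 := by rw [hD0g]; ring
        _ = ∏ i ∈ Finset.range (h + 1), D i := (Finset.prod_range_succ' D h).symm
        _ = (∏ i ∈ Finset.range h, D i) * D h := Finset.prod_range_succ D h
        _ = σ c₀ * D h := by rw [fact2]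
    have hqDh : q = D h * q'' := hq''
    refine ⟨a, b, c' * c₀, ha0, hb0, mul_ne_zero hc'0 hc₀0,
      hap.trans ⟨g, by rw [hp']; ring⟩, hbq.trans ⟨D h, by rw [hqDh]; ring⟩, ?_, ?_, hi, ?_, ?_⟩
    · -- the equation
      rw [map_mul]
      calc p * b * (c' * c₀) = (g * p') * b * (c' * c₀) := by rw [hp']
        _ = (p' * b * c') * (g * c₀) := by ring
        _ = (q'' * a * σ c') * (σ c₀ * D h) := by rw [heq, fact3]
        _ = (D h * q'') * a * (σ c' * σ c₀) := by ring
        _ = q * a * (σ c' * σ c₀) := by rw [← hqDh]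
    · -- factors of c map into p
      intro e he hec
      have hprime : Prime e := UniqueFactorizationMonoid.irreducible_iff_prime.mp he
      rcases hprime.dvd_or_dvd hec with hec' | hec₀
      · obtain ⟨i, hi'⟩ := hcf e he hec'
        exact ⟨i, hi'.trans ⟨g, by rw [hp']; ring⟩⟩
      · obtain ⟨i, himem, hdvd⟩ := hprime.exists_mem_finset_dvd hec₀
        refine ⟨i + 1, ?_⟩
        have : (σ ^ (i + 1)) e ∣ (σ ^ (i + 1)) (D (i + 1)) := map_dvd _ hdvd
        rw [hDapp] at this
        exact this.trans hgp
    · -- gcd(a, c) = 1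
      intro d hda hdc
      by_contra hdu
      have hd0 : d ≠ 0 := ne_zero_of_dvd_ne_zero ha0 hda
      obtain ⟨e, he, hed⟩ := WfDvdMonoid.exists_irreducible_factor hdu hd0
      have hea : e ∣ a := hed.trans hda
      have heprime : Prime e := UniqueFactorizationMonoid.irreducible_iff_prime.mp he
      rcases heprime.dvd_or_dvd (hed.trans hdc) with hec' | hec₀
      · exact he.not_isUnit (hii e hea hec')
      · obtain ⟨i, himem, hdvd⟩ := heprime.exists_mem_finset_dvd hec₀
        have hle : i + 1 ≤ h := Finset.mem_range.mp himem
        have h1 : (σ ^ (i + 1)) e ∣ g := by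
          have := map_dvd (σ ^ (i + 1)) hdvd
          rwa [hDapp] at this
        have h2 : (σ ^ (i + 1)) e ∣ (σ ^ (i + 1)) ((σ ^ (h - (i + 1))) q) := by
          have hsp : (σ ^ (i + 1)) ((σ ^ (h - (i + 1))) q) = (σ ^ h) q := by
            rw [← AlgEquiv.mul_apply, ← pow_add, Nat.add_sub_cancel' hle]
          rw [hsp]; exact h1.trans hgq
        have h3 : e ∣ (σ ^ (h - (i + 1))) q := by
          have := map_dvd (σ ^ (i + 1)).symm h2
          rwa [(σ ^ (i + 1)).symm_apply_apply, (σ ^ (i + 1)).symm_apply_apply] at this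
        have h4 : e ∣ p := hea.trans (hap.trans ⟨g, by rw [hp']; ring⟩)
        have hmem : (h - (i + 1)) ∈ S := ⟨e, he.not_isUnit, h4, h3⟩
        have := Nat.sInf_le hmem
        omega
    · -- gcd(b, σ c) = 1
      intro d hdb hdc
      by_contra hdu
      have hd0 : d ≠ 0 := ne_zero_of_dvd_ne_zero hb0 hdb
      obtain ⟨e, he, hed⟩ := WfDvdMonoid.exists_irreducible_factor hdu hd0
      have heb : e ∣ b := hed.trans hdb
      have heprime : Prime e := UniqueFactorizationMonoid.irreducible_iff_prime.mp he
      have hec : e ∣ σ c' * σ c₀ := by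
        have := hed.trans hdc; rwa [map_mul] at this
      rcases heprime.dvd_or_dvd hec with hec' | hec₀
      · exact he.not_isUnit (hiii e heb hec')
      · rw [fact2] at hec₀
        obtain ⟨i, himem, hdvd⟩ := heprime.exists_mem_finset_dvd hec₀
        have hlt : i < h := Finset.mem_range.mp himem
        have h1 : (σ ^ i) e ∣ g := by
          have := map_dvd (σ ^ i) hdvd
          rwa [hDapp] at this
        have h2 : (σ ^ i) e ∣ p := h1.trans ⟨p', hp'⟩
        have h3 : (σ ^ i) e ∣ (σ ^ i) q :=
          map_dvd _ (heb.trans (hbq.trans ⟨D h, by rw [hqDh]; ring⟩))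
        have h4 : ¬IsUnit ((σ ^ i) e) := by
          intro hun
          apply he.not_isUnit
          have := hun.map (σ ^ i).symm
          rwa [(σ ^ i).symm_apply_apply] at this
        have hmem : i ∈ S := ⟨(σ ^ i) e, h4, h2, h3⟩
        have := Nat.sInf_le hmem
        omega

end GP

theorem stmt14 {F : Type*} [Field F] (u v : F) (hu : u ≠ 0)
    (σ : MvPolynomial (Fin 2) F ≃ₐ[F] MvPolynomial (Fin 2) F)
    (hα : σ (X 0) = X 1) (hβ : σ (X 1) = C u * X 0 + C v * X 1)
    (hdeg : ∀ p : MvPolynomial (Fin 2) F, (σ p).totalDegree = p.totalDegree)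
    (K : Type*) [Field K] [Algebra (MvPolynomial (Fin 2) F) K]
    [IsFractionRing (MvPolynomial (Fin 2) F) K]
    (r : K) (hr : r ≠ 0) :
    ∃ A B Cp Ainf Abar Binf Bbar : MvPolynomial (Fin 2) F,
      B ≠ 0 ∧ Cp ≠ 0 ∧
      -- r = (A/B) · (σ(Cp)/Cp), written without division
      r * algebraMap (MvPolynomial (Fin 2) F) K B * algebraMap (MvPolynomial (Fin 2) F) K Cp =
        algebraMap (MvPolynomial (Fin 2) F) K A *
          algebraMap (MvPolynomial (Fin 2) F) K (σ Cp) ∧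
      -- splitting factorizations of A and B
      A = Ainf * Abar ∧ B = Binf * Bbar ∧
      (∀ d, Irreducible d → d ∣ Ainf → Dis σ d d = ⊤) ∧
      (∀ d, Irreducible d → d ∣ Abar → Dis σ d d ≠ ⊤) ∧
      (∀ d, Irreducible d → d ∣ Binf → Dis σ d d = ⊤) ∧
      (∀ d, Irreducible d → d ∣ Bbar → Dis σ d d ≠ ⊤) ∧
      -- (i) gcd(Ā, σ^h B̄) = 1 for all h ∈ ℕ
      (∀ h : ℕ, ∀ d : MvPolynomial (Fin 2) F, d ∣ Abar → d ∣ (σ ^ h) Bbar → IsUnit d) ∧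
      -- (ii) gcd(A, Cp) = 1
      (∀ d : MvPolynomial (Fin 2) F, d ∣ A → d ∣ Cp → IsUnit d) ∧
      -- (iii) gcd(B, σ(Cp)) = 1
      (∀ d : MvPolynomial (Fin 2) F, d ∣ B → d ∣ σ Cp → IsUnit d) := by
  set R := MvPolynomial (Fin 2) F
  set φ := algebraMap R K with hφdef
  have hφ : Function.Injective φ := IsFractionRing.injective R K
  obtain ⟨⟨p, q⟩, hpq⟩ := IsLocalization.surj (nonZeroDivisors R) r
  simp only at hpq
  have hq0 : (q : R) ≠ 0 := nonZeroDivisors.ne_zero q.2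
  have hφq : φ (q : R) ≠ 0 := fun h => hq0 (hφ (by rw [h, map_zero]))
  have hp0 : p ≠ 0 := by
    rintro rfl
    rw [map_zero] at hpq
    exact mul_ne_zero hr hφq hpq
  obtain ⟨pinf, pbar, hpsplit, hpinf0, hpbar0, hpinfD, hpbarD⟩ := split σ p hp0
  obtain ⟨qinf, qbar, hqsplit, hqinf0, hqbar0, hqinfD, hqbarD⟩ := split σ (q : R) hq0
  obtain ⟨a, b, c, ha0, hb0, hc0, hap, hbq, heq, hcf, hi, hii, hiii⟩ :=
    gp σ (Multiset.card (UniqueFactorizationMonoid.factors pbar)) pbar qbar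
      hpbar0 hqbar0 le_rfl
  refine ⟨pinf * a, qinf * b, c, pinf, a, qinf, b,
    mul_ne_zero hqinf0 hb0, hc0, ?_, rfl, rfl, hpinfD, ?_, hqinfD, ?_, hi, ?_, ?_⟩
  · -- the equation
    have hφqbar : φ qbar ≠ 0 :=
      fun h => hqbar0 (hφ (by rw [h, map_zero]))
    apply mul_right_cancel₀ hφqbar
    have key : p * (b * c) = (pinf * a) * σ c * qbar := by
      calc p * (b * c) = pinf * (pbar * b * c) := by rw [hpsplit]; ring
        _ = pinf * (qbar * a * σ c) := by rw [heq]
        _ = (pinf * a) * σ c * qbar := by ring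
    calc r * φ (qinf * b) * φ c * φ qbar
        = (r * φ (qinf * qbar)) * (φ b * φ c) := by
          rw [map_mul, map_mul]; ring
      _ = (r * φ (q : R)) * (φ b * φ c) := by rw [← hqsplit]
      _ = φ p * (φ b * φ c) := by rw [hpq]
      _ = φ (p * (b * c)) := by rw [map_mul, map_mul]
      _ = φ ((pinf * a) * σ c * qbar) := by rw [key]
      _ = φ (pinf * a) * φ (σ c) * φ qbar := by rw [map_mul, map_mul]
  · -- factors of a have finite dispersion
    intro d hd hda
    exact hpbarD d hd (hda.trans hap)
  · -- factors of b have finite dispersion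
    intro d hd hdb
    exact hqbarD d hd (hdb.trans hbq)
  · -- gcd(A, Cp) = 1
    intro d hdA hdC
    by_contra hdu
    have hd0 : d ≠ 0 := ne_zero_of_dvd_ne_zero hc0 hdC
    obtain ⟨e, he, hed⟩ := WfDvdMonoid.exists_irreducible_factor hdu hd0
    have heprime : Prime e := UniqueFactorizationMonoid.irreducible_iff_prime.mp he
    rcases heprime.dvd_or_dvd (hed.trans hdA) with h1 | h1
    · obtain ⟨i, hi'⟩ := hcf e he (hed.trans hdC)
      have hirr : Irreducible ((σ ^ i) e) := he.map (σ ^ i : R ≃ₐ[F] R)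
      have hfin : Dis σ ((σ ^ i) e) ((σ ^ i) e) ≠ ⊤ := hpbarD _ hirr hi'
      rw [Dis_pow σ hdeg] at hfin
      exact hfin (hpinfD e he h1)
    · exact he.not_isUnit (hii e h1 (hed.trans hdC))
  · -- gcd(B, σ Cp) = 1
    intro d hdB hdC
    by_contra hdu
    have hB0 : qinf * b ≠ 0 := mul_ne_zero hqinf0 hb0
    have hd0 : d ≠ 0 := ne_zero_of_dvd_ne_zero hB0 hdB
    obtain ⟨e, he, hed⟩ := WfDvdMonoid.exists_irreducible_factor hdu hd0
    have heprime : Prime e := UniqueFactorizationMonoid.irreducible_iff_prime.mp he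
    rcases heprime.dvd_or_dvd (hed.trans hdB) with h1 | h1
    · -- e ∣ qinf : infinite dispersion, but e ∣ σ c gives finite
      have hesc : e ∣ σ c := hed.trans hdC
      have hec : σ.symm e ∣ c := by
        have := map_dvd σ.symm hesc
        rwa [σ.symm_apply_apply] at this
      have hsymmirr : Irreducible (σ.symm e) := he.map (σ.symm : R ≃ₐ[F] R)
      obtain ⟨i, hi'⟩ := hcf (σ.symm e) hsymmirr hec
      have hirr : Irreducible ((σ ^ i) (σ.symm e)) := hsymmirr.map (σ ^ i : R ≃ₐ[F] R)
      have hfin : Dis σ ((σ ^ i) (σ.symm e)) ((σ ^ i) (σ.symm e)) ≠ ⊤ := hpbarD _ hirr hi'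
      rw [Dis_pow σ hdeg, Dis_symm σ hdeg] at hfin
      exact hfin (hqinfD e he h1)
    · exact he.not_isUnit (hiii e h1 (hed.trans hdC))
end

section
/- For the Lucas numbers L_n (L₀=2, L₁=1, L_{n+2}=L_{n+1}+L_n), for every k ≥ 1: ∑_{n=1}^{k} (−1)^{n−1}/(L_{n−1}L_n) = (−1)^{k−1}·φ/(L_k·(L_k + φ·L_{k+1})) + √5/10, where φ = (1+√5)/2. -/
/-- The Lucas numbers: L₀ = 2, L₁ = 1, L_{n+2} = L_{n+1} + L_n. -/
def lucas : ℕ → ℕ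
  | 0 => 2
  | 1 => 1
  | n + 2 => lucas (n + 1) + lucas n

lemma lucas_pos : ∀ n, 0 < lucas n
  | 0 => by norm_num [lucas]
  | 1 => by norm_num [lucas]
  | n + 2 => by
      have := lucas_pos n
      have := lucas_pos (n+1)
      simp [lucas]; omega

lemma step16 (s a b x : ℝ) (hs : s * s = 5) (hspos : 0 < s) (ha : 0 < a) (hb : 0 < b) :
    x * ((1 + s)/2) / (a * (a + (1 + s)/2 * b)) + s/10 + x * (-1) / (a * b) =
    x * (-1) * ((1 + s)/2) / (b * (b + (1 + s)/2 * (b + a))) + s/10 := by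
  have hd1 : a + (1 + s)/2 * b > 0 := by positivity
  have hd2 : b + (1 + s)/2 * (b + a) > 0 := by positivity
  field_simp
  linear_combination (10*x*a*b) * hs

theorem stmt16 (k : ℕ) (hk : 1 ≤ k) :
    ∑ n ∈ Finset.Icc 1 k, ((-1 : ℝ)) ^ (n - 1) / (lucas (n - 1) * lucas n) =
      (-1 : ℝ) ^ (k - 1) * ((1 + Real.sqrt 5) / 2) /
          (lucas k * (lucas k + ((1 + Real.sqrt 5) / 2) * lucas (k + 1))) +
        Real.sqrt 5 / 10 := by
  have hs : Real.sqrt 5 * Real.sqrt 5 = 5 := Real.mul_self_sqrt (by norm_num)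
  have hspos : 0 < Real.sqrt 5 := Real.sqrt_pos.mpr (by norm_num)
  obtain ⟨n, rfl⟩ : ∃ n, k = n + 1 := ⟨k - 1, by omega⟩
  clear hk
  induction n with
  | zero =>
      rw [show Finset.Icc 1 1 = {1} from rfl, Finset.sum_singleton]
      norm_num [lucas, show lucas 2 = 3 from rfl]
      have h1 : (1 : ℝ) + (1 + Real.sqrt 5)/2 * 3 > 0 := by positivity
      field_simp
      linear_combination (-6 : ℝ) * hs
  | succ n ih =>
      rw [Finset.sum_Icc_succ_top (by omega), ih]
      have ha : (0:ℝ) < lucas (n+1) := by exact_mod_cast lucas_pos (n+1)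
      have hb : (0:ℝ) < lucas (n+2) := by exact_mod_cast lucas_pos (n+2)
      have hrec : (lucas (n+1+2) : ℝ) = lucas (n+2) + lucas (n+1) := by
        rw [lucas]; push_cast; ring
      rw [show n+1+1 = n+2 from rfl, hrec]
      simp only [Nat.add_sub_cancel, pow_succ]
      exact step16 (Real.sqrt 5) (lucas (n+1)) (lucas (n+2)) ((-1)^n) hs hspos ha hb
end
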